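/- A finite graph G has a 2-arc-connected orientation if and only if G is 4-edge-connected. -/
import Mathlib


open Relation

/-- `D` is an orientation of the simple graph `G`: every arc is along an edge,
and every edge gets exactly one direction. -/
def IsOrientation {V : Type*} (G : SimpleGraph V) (D : V → V → Prop) : Prop :=
  (∀ a b, D a b → G.Adj a b) ∧ ∀ a b, G.Adj a b → (D a b ↔ ¬ D b a)

/-- The digraph given by the relation `D` is strongly connected. -/
def StrongConn {V : Type*} (D : V → V → Prop) : Prop :=
  ∀ a b : V, ReflTransGen D a b

/-- `D - v` is strongly connected. -/
def StrongAvoid {V : Type*} (D : V → V → Prop) (v : V) : Prop :=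
  ∀ a b : V, a ≠ v → b ≠ v →
    ReflTransGen (fun x y => D x y ∧ x ≠ v ∧ y ≠ v) a b

/-- `G` is `k`-edge-connected: every nonempty proper vertex set has at least
`k` boundary edges (each crossing edge counted once, ordered with first endpoint inside). -/
def EdgeConn {V : Type*} (G : SimpleGraph V) (k : ℕ) : Prop :=
  ∀ X : Set V, X.Nonempty → X ≠ Set.univ →
    k ≤ Nat.card {p : V × V // p.1 ∈ X ∧ p.2 ∉ X ∧ G.Adj p.1 p.2}

/-- The digraph `D` is `k`-arc-connected: every nonempty proper vertex set has
at least `k` entering arcs. -/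
def ArcConn {V : Type*} (D : V → V → Prop) (k : ℕ) : Prop :=
  ∀ X : Set V, X.Nonempty → X ≠ Set.univ →
    k ≤ Nat.card {p : V × V // D p.1 p.2 ∧ p.1 ∉ X ∧ p.2 ∈ X}

/-- `D` is 2-vertex-connected: at least 3 vertices, strongly connected, and
strongly connected after deleting any vertex. -/
def TwoVC {V : Type*} (D : V → V → Prop) : Prop :=
  3 ≤ Nat.card V ∧ StrongConn D ∧ ∀ v : V, StrongAvoid D v


set_option linter.unusedSectionVars false

universe u

namespace NWaux

open Finset

variable {V : Type u} [Fintype V] [DecidableEq V]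

/-- sum of `m a b` over `A × B`. -/
def ein (m : V → V → ℕ) (A B : Finset V) : ℕ := ∑ a ∈ A, ∑ b ∈ B, m a b

/-- cut value of `X`. -/
def cutv (m : V → V → ℕ) (X : Finset V) : ℕ := ein m X Xᶜ

/-- in-degree of `X` under arc-multiplicity function `o`. -/
def din (o : V → V → ℕ) (X : Finset V) : ℕ := ein o Xᶜ X

def bsum (f : V → V → ℕ) : ℕ := ∑ x : V, ∑ y : V, f x y

lemma bsum_add (f g : V → V → ℕ) :
    bsum (fun x y => f x y + g x y) = bsum f + bsum g := by
  unfold bsum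
  rw [← Finset.sum_add_distrib]
  exact Finset.sum_congr rfl fun x _ => by rw [← Finset.sum_add_distrib]

lemma bsum_congr {f g : V → V → ℕ} (h : ∀ x y, f x y = g x y) : bsum f = bsum g := by
  unfold bsum; exact Finset.sum_congr rfl fun x _ => Finset.sum_congr rfl fun y _ => h x y

lemma bsum_le {f g : V → V → ℕ} (h : ∀ x y, f x y ≤ g x y) : bsum f ≤ bsum g := by
  unfold bsum
  exact Finset.sum_le_sum fun x _ => Finset.sum_le_sum fun y _ => h x y

lemma ein_eq_bsum (m : V → V → ℕ) (A B : Finset V) :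
    ein m A B = bsum (fun x y => if x ∈ A ∧ y ∈ B then m x y else 0) := by
  unfold ein bsum
  have h : ∀ x : V, (∑ y : V, if x ∈ A ∧ y ∈ B then m x y else 0)
      = if x ∈ A then ∑ b ∈ B, m x b else 0 := by
    intro x
    by_cases hx : x ∈ A
    · simp only [hx, true_and]
      rw [Finset.sum_ite_mem, Finset.univ_inter]
      simp
    · simp [hx]
  rw [Finset.sum_congr rfl (fun x _ => h x), Finset.sum_ite_mem, Finset.univ_inter]

lemma cutv_eq_bsum (m : V → V → ℕ) (X : Finset V) :
    cutv m X = bsum (fun x y => if x ∈ X ∧ y ∉ X then m x y else 0) := by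
  rw [cutv, ein_eq_bsum]; exact bsum_congr fun x y => by simp

lemma din_eq_bsum (o : V → V → ℕ) (X : Finset V) :
    din o X = bsum (fun x y => if x ∉ X ∧ y ∈ X then o x y else 0) := by
  rw [din, ein_eq_bsum]; exact bsum_congr fun x y => by simp

lemma bsum_swap (f : V → V → ℕ) : bsum f = bsum (fun x y => f y x) := by
  unfold bsum; exact Finset.sum_comm

/-- single-term lower bound -/
lemma single_le_ein {m : V → V → ℕ} {A B : Finset V} {a b : V} (ha : a ∈ A) (hb : b ∈ B) :
    m a b ≤ ein m A B := by
  unfold ein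
  calc m a b ≤ ∑ y ∈ B, m a y := Finset.single_le_sum (fun _ _ => Nat.zero_le _) hb
  _ ≤ _ := Finset.single_le_sum (f := fun x => ∑ y ∈ B, m x y) (fun _ _ => Nat.zero_le _) ha

/-- two-term lower bound -/
lemma pair_le_ein {m : V → V → ℕ} {A B : Finset V} {a b c d : V} (ha : a ∈ A) (hb : b ∈ B)
    (hc : c ∈ A) (hd : d ∈ B) (hne : (a, b) ≠ (c, d)) :
    m a b + m c d ≤ ein m A B := by
  by_cases hac : a = c
  · subst hac
    have hbd : b ≠ d := fun h => hne (by rw [h])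
    have : m a b + m a d ≤ ∑ y ∈ B, m a y := by
      have hsub : {b, d} ⊆ B := by intro z hz; rcases Finset.mem_insert.1 hz with h | h
                                   · exact h ▸ hb
                                   · exact (Finset.mem_singleton.1 h) ▸ hd
      calc m a b + m a d = ∑ y ∈ ({b, d} : Finset V), m a y := (Finset.sum_pair hbd).symm
      _ ≤ _ := Finset.sum_le_sum_of_subset hsub
    calc m a b + m a d ≤ ∑ y ∈ B, m a y := this
    _ ≤ _ := Finset.single_le_sum (f := fun x => ∑ y ∈ B, m x y) (fun _ _ => Nat.zero_le _) ha
  · have hsub : {a, c} ⊆ A := by intro z hz; rcases Finset.mem_insert.1 hz with h | h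
                                 · exact h ▸ ha
                                 · exact (Finset.mem_singleton.1 h) ▸ hc
    have h1 : m a b ≤ ∑ y ∈ B, m a y := Finset.single_le_sum (fun _ _ => Nat.zero_le _) hb
    have h2 : m c d ≤ ∑ y ∈ B, m c y := Finset.single_le_sum (fun _ _ => Nat.zero_le _) hd
    calc m a b + m c d ≤ (∑ y ∈ B, m a y) + ∑ y ∈ B, m c y := Nat.add_le_add h1 h2
    _ = ∑ x ∈ ({a, c} : Finset V), ∑ y ∈ B, m x y := (Finset.sum_pair (f := fun x => ∑ y ∈ B, m x y) hac).symm
    _ ≤ _ := Finset.sum_le_sum_of_subset hsub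

lemma ein_mono {m : V → V → ℕ} {A B A' B' : Finset V} (hA : A ⊆ A') (hB : B ⊆ B') :
    ein m A B ≤ ein m A' B' := by
  unfold ein
  calc ∑ a ∈ A, ∑ b ∈ B, m a b ≤ ∑ a ∈ A, ∑ b ∈ B', m a b :=
        Finset.sum_le_sum fun a _ => Finset.sum_le_sum_of_subset hB
  _ ≤ _ := Finset.sum_le_sum_of_subset hA

lemma ein_comm {m : V → V → ℕ} (hsym : ∀ x y, m x y = m y x) (A B : Finset V) :
    ein m A B = ein m B A := by
  unfold ein; rw [Finset.sum_comm]
  exact Finset.sum_congr rfl fun b _ => Finset.sum_congr rfl fun a _ => hsym a b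

lemma cutv_compl {m : V → V → ℕ} (hsym : ∀ x y, m x y = m y x) (X : Finset V) :
    cutv m Xᶜ = cutv m X := by
  unfold cutv
  rw [compl_compl, ein_comm hsym]

lemma cutv_empty (m : V → V → ℕ) : cutv m (∅ : Finset V) = 0 := by
  simp [cutv, ein]

lemma bsum_mul (c : ℕ) (f : V → V → ℕ) : bsum (fun x y => c * f x y) = c * bsum f := by
  unfold bsum
  rw [Finset.mul_sum]
  exact Finset.sum_congr rfl fun x _ => by rw [Finset.mul_sum]

lemma sub1 (m : V → V → ℕ) (X Y : Finset V) :
    cutv m X + cutv m Y =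
      cutv m (X ∩ Y) + cutv m (X ∪ Y) + (ein m (X \ Y) (Y \ X) + ein m (Y \ X) (X \ Y)) := by
  have key : ∀ x y : V,
      (if x ∈ X ∧ y ∉ X then m x y else 0) + (if x ∈ Y ∧ y ∉ Y then m x y else 0)
      = ((if x ∈ X ∩ Y ∧ y ∉ X ∩ Y then m x y else 0)
          + (if x ∈ X ∪ Y ∧ y ∉ X ∪ Y then m x y else 0))
        + ((if x ∈ X \ Y ∧ y ∈ Y \ X then m x y else 0)
          + (if x ∈ Y \ X ∧ y ∈ X \ Y then m x y else 0)) := by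
    intro x y
    by_cases h1 : x ∈ X <;> by_cases h2 : x ∈ Y <;> by_cases h3 : y ∈ X <;> by_cases h4 : y ∈ Y <;>
      simp [h1, h2, h3, h4]
  calc cutv m X + cutv m Y
      = bsum (fun x y => (if x ∈ X ∧ y ∉ X then m x y else 0)
          + (if x ∈ Y ∧ y ∉ Y then m x y else 0)) := by
        rw [bsum_add, cutv_eq_bsum, cutv_eq_bsum]
    _ = bsum (fun x y => ((if x ∈ X ∩ Y ∧ y ∉ X ∩ Y then m x y else 0)
          + (if x ∈ X ∪ Y ∧ y ∉ X ∪ Y then m x y else 0))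
        + ((if x ∈ X \ Y ∧ y ∈ Y \ X then m x y else 0)
          + (if x ∈ Y \ X ∧ y ∈ X \ Y then m x y else 0))) := bsum_congr key
    _ = _ := by
        rw [bsum_add, bsum_add, bsum_add, ← cutv_eq_bsum, ← cutv_eq_bsum,
          ← ein_eq_bsum, ← ein_eq_bsum]

lemma sub2 {m : V → V → ℕ} (hsym : ∀ x y, m x y = m y x) (X Y : Finset V) :
    cutv m X + cutv m Y =
      cutv m (X \ Y) + cutv m (Y \ X) + 2 * ein m (X ∩ Y) ((X ∪ Y)ᶜ) := by
  have SW : ∀ Z : Finset V,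
      bsum (fun x y => if y ∈ Z ∧ x ∉ Z then m y x else 0) = cutv m Z := by
    intro Z; rw [cutv_eq_bsum, bsum_swap]
  have DE : bsum (fun x y => (2:ℕ) * if x ∈ X ∩ Y ∧ y ∈ (X ∪ Y)ᶜ then m x y else 0)
      = 2 * ein m (X ∩ Y) ((X ∪ Y)ᶜ) := by
    rw [bsum_mul, ← ein_eq_bsum]
  have SE : bsum (fun x y => (2:ℕ) * if y ∈ X ∩ Y ∧ x ∈ (X ∪ Y)ᶜ then m y x else 0)
      = 2 * ein m (X ∩ Y) ((X ∪ Y)ᶜ) := by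
    rw [bsum_mul, bsum_swap]
    rw [← ein_eq_bsum]
  have key : ∀ x y : V,
      ((if x ∈ X ∧ y ∉ X then m x y else 0) + (if x ∈ Y ∧ y ∉ Y then m x y else 0))
      + ((if y ∈ X ∧ x ∉ X then m y x else 0) + (if y ∈ Y ∧ x ∉ Y then m y x else 0))
      = (((if x ∈ X \ Y ∧ y ∉ X \ Y then m x y else 0)
          + (if x ∈ Y \ X ∧ y ∉ Y \ X then m x y else 0))
          + (2 * if x ∈ X ∩ Y ∧ y ∈ (X ∪ Y)ᶜ then m x y else 0))
      + (((if y ∈ X \ Y ∧ x ∉ X \ Y then m y x else 0)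
          + (if y ∈ Y \ X ∧ x ∉ Y \ X then m y x else 0))
          + (2 * if y ∈ X ∩ Y ∧ x ∈ (X ∪ Y)ᶜ then m y x else 0)) := by
    intro x y
    have e : m x y = m y x := hsym x y
    by_cases h1 : x ∈ X <;> by_cases h2 : x ∈ Y <;> by_cases h3 : y ∈ X <;> by_cases h4 : y ∈ Y <;>
      simp [h1, h2, h3, h4] <;> omega
  have main : (cutv m X + cutv m Y) + (cutv m X + cutv m Y)
      = (cutv m (X \ Y) + cutv m (Y \ X) + 2 * ein m (X ∩ Y) ((X ∪ Y)ᶜ))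
        + (cutv m (X \ Y) + cutv m (Y \ X) + 2 * ein m (X ∩ Y) ((X ∪ Y)ᶜ)) := by
    calc (cutv m X + cutv m Y) + (cutv m X + cutv m Y)
        = bsum (fun x y => ((if x ∈ X ∧ y ∉ X then m x y else 0)
            + (if x ∈ Y ∧ y ∉ Y then m x y else 0))
          + ((if y ∈ X ∧ x ∉ X then m y x else 0) + (if y ∈ Y ∧ x ∉ Y then m y x else 0))) := by
          rw [bsum_add, bsum_add, bsum_add, ← cutv_eq_bsum, ← cutv_eq_bsum, SW X, SW Y]
      _ = bsum (fun x y => (((if x ∈ X \ Y ∧ y ∉ X \ Y then m x y else 0)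
          + (if x ∈ Y \ X ∧ y ∉ Y \ X then m x y else 0))
          + (2 * if x ∈ X ∩ Y ∧ y ∈ (X ∪ Y)ᶜ then m x y else 0))
        + (((if y ∈ X \ Y ∧ x ∉ X \ Y then m y x else 0)
          + (if y ∈ Y \ X ∧ x ∉ Y \ X then m y x else 0))
          + (2 * if y ∈ X ∩ Y ∧ x ∈ (X ∪ Y)ᶜ then m y x else 0))) := bsum_congr key
      _ = _ := by
          rw [bsum_add, bsum_add, bsum_add, bsum_add, bsum_add,
            ← cutv_eq_bsum, ← cutv_eq_bsum, SW (X \ Y), SW (Y \ X), DE, SE]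
  omega

def dInd (a b : V) : V → V → ℕ := fun x y => if x = a ∧ y = b then 1 else 0

lemma bsum_point (a b : V) (c : ℕ) :
    bsum (fun x y => if x = a ∧ y = b then c else 0) = c := by
  unfold bsum
  have h : ∀ x : V, (∑ y : V, if x = a ∧ y = b then c else 0) = if x = a then c else 0 := by
    intro x
    by_cases hx : x = a
    · subst hx; simp
    · simp [hx]
  rw [Finset.sum_congr rfl fun x _ => h x]
  simp

lemma cutv_add (f g : V → V → ℕ) (X : Finset V) :
    cutv (fun x y => f x y + g x y) X = cutv f X + cutv g X := by
  rw [cutv_eq_bsum, cutv_eq_bsum, cutv_eq_bsum, ← bsum_add]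
  exact bsum_congr fun x y => by by_cases h : x ∈ X ∧ y ∉ X <;> simp [h]

lemma din_add (f g : V → V → ℕ) (X : Finset V) :
    din (fun x y => f x y + g x y) X = din f X + din g X := by
  rw [din_eq_bsum, din_eq_bsum, din_eq_bsum, ← bsum_add]
  exact bsum_congr fun x y => by by_cases h : x ∉ X ∧ y ∈ X <;> simp [h]

lemma cutv_congr_ne {f g : V → V → ℕ} (h : ∀ x y, x ≠ y → f x y = g x y) (X : Finset V) :
    cutv f X = cutv g X := by
  rw [cutv_eq_bsum, cutv_eq_bsum]
  apply bsum_congr; intro x y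
  by_cases hc : x ∈ X ∧ y ∉ X
  · have hne : x ≠ y := fun he => hc.2 (he ▸ hc.1)
    simp [hc, h x y hne]
  · simp [hc]

lemma din_congr_ne {f g : V → V → ℕ} (h : ∀ x y, x ≠ y → f x y = g x y) (X : Finset V) :
    din f X = din g X := by
  rw [din_eq_bsum, din_eq_bsum]
  apply bsum_congr; intro x y
  by_cases hc : x ∉ X ∧ y ∈ X
  · have hne : x ≠ y := fun he => hc.1 (he ▸ hc.2)
    simp [hc, h x y hne]
  · simp [hc]

lemma cutv_dInd (a b : V) (X : Finset V) :
    cutv (dInd a b) X = if a ∈ X ∧ b ∉ X then 1 else 0 := by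
  rw [cutv_eq_bsum]
  have h : ∀ x y : V, (if x ∈ X ∧ y ∉ X then dInd a b x y else 0)
      = if x = a ∧ y = b then (if a ∈ X ∧ b ∉ X then 1 else 0) else 0 := by
    intro x y; unfold dInd
    by_cases hx : x = a ∧ y = b
    · obtain ⟨h1, h2⟩ := hx; subst h1; subst h2; simp
    · simp only [hx, if_false]
      by_cases hc : x ∈ X ∧ y ∉ X <;> simp [hc, hx]
  rw [bsum_congr h, bsum_point]

lemma din_dInd (a b : V) (X : Finset V) :
    din (dInd a b) X = if a ∉ X ∧ b ∈ X then 1 else 0 := by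
  rw [din_eq_bsum]
  have h : ∀ x y : V, (if x ∉ X ∧ y ∈ X then dInd a b x y else 0)
      = if x = a ∧ y = b then (if a ∉ X ∧ b ∈ X then 1 else 0) else 0 := by
    intro x y; unfold dInd
    by_cases hx : x = a ∧ y = b
    · obtain ⟨h1, h2⟩ := hx; subst h1; subst h2; simp
    · simp only [hx, if_false]
      by_cases hc : x ∉ X ∧ y ∈ X <;> simp [hc, hx]
  rw [bsum_congr h, bsum_point]

lemma cutv_singleton (m : V → V → ℕ) (s : V) :
    cutv m {s} = ∑ y ∈ ({s} : Finset V)ᶜ, m s y := by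
  unfold cutv ein; simp

lemma ein_singleton_left (m : V → V → ℕ) (s : V) (X : Finset V) :
    ein m {s} X = ∑ y ∈ X, m s y := by
  unfold ein; simp

lemma ein_union_right {m : V → V → ℕ} {A B C : Finset V} (h : Disjoint B C) :
    ein m A (B ∪ C) = ein m A B + ein m A C := by
  unfold ein
  rw [← Finset.sum_add_distrib]
  exact Finset.sum_congr rfl fun a _ => Finset.sum_union h

lemma cut_union_singleton {m : V → V → ℕ} (hsym : ∀ x y, m x y = m y x) {X : Finset V}
    {s : V} (hs : s ∉ X) :
    cutv m X + cutv m {s} = cutv m (X ∪ {s}) + 2 * ein m {s} X := by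
  have h := sub1 m X {s}
  have h1 : X ∩ {s} = ∅ := by
    ext z; simp only [Finset.mem_inter, Finset.mem_singleton, Finset.notMem_empty, iff_false]
    rintro ⟨hz, rfl⟩; exact hs hz
  have h2 : X \ {s} = X := by
    ext z; simp only [Finset.mem_sdiff, Finset.mem_singleton]
    exact ⟨fun h => h.1, fun h => ⟨h, fun he => hs (he ▸ h)⟩⟩
  have h3 : ({s} : Finset V) \ X = {s} := by
    ext z; simp only [Finset.mem_sdiff, Finset.mem_singleton]
    exact ⟨fun h => h.1, fun h => ⟨h, h ▸ hs⟩⟩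
  rw [h1, h2, h3, cutv_empty, ein_comm hsym X {s}] at h
  omega

lemma exists_maximal_superset {P : Finset V → Prop} {D : Finset V} (hD : P D) :
    ∃ M, P M ∧ D ⊆ M ∧ ∀ Z, P Z → M ⊆ Z → Z = M := by
  classical
  have hne : (Finset.univ.powerset.filter fun X => P X ∧ D ⊆ X).Nonempty :=
    ⟨D, by simp [hD]⟩
  obtain ⟨M, hM, hmax⟩ := Finset.exists_max_image _ Finset.card hne
  simp only [Finset.mem_filter, Finset.mem_powerset] at hM
  refine ⟨M, hM.2.1, hM.2.2, fun Z hZ hMZ => ?_⟩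
  have hZmem : Z ∈ Finset.univ.powerset.filter fun X => P X ∧ D ⊆ X := by
    simp only [Finset.mem_filter, Finset.mem_powerset]
    exact ⟨Finset.subset_univ _, hZ, hM.2.2.trans hMZ⟩
  exact (Finset.eq_of_subset_of_card_le hMZ (hmax Z hZmem)).symm

/-- dangerous sets (containing the fixed neighbour `t`). -/
def Dang (m : V → V → ℕ) (B : ℕ) (s t : V) (X : Finset V) : Prop :=
  s ∉ X ∧ t ∈ X ∧ (∃ b, b ∉ X ∧ b ≠ s) ∧ cutv m X ≤ B + 1

/-- Lovász splitting-off theorem. -/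
lemma lovasz {m : V → V → ℕ} (hsym : ∀ x y, m x y = m y x) {B : ℕ} (hB : 2 ≤ B) (s : V)
    (hcut : ∀ X : Finset V, (∃ a, a ∈ X ∧ a ≠ s) → (∃ b, b ∉ X ∧ b ≠ s) → B ≤ cutv m X)
    {j : ℕ} (hj : 1 ≤ j) (hds : cutv m {s} = 2 * j) :
    ∃ u v, u ≠ s ∧ v ≠ s ∧ 1 ≤ m s u ∧ 1 ≤ m s v ∧ (u = v → 2 ≤ m s u) ∧
      ∀ X : Finset V, s ∉ X → (∃ b, b ∉ X ∧ b ≠ s) → u ∈ X → v ∈ X → B + 2 ≤ cutv m X := by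
  classical
  by_contra hno
  push_neg at hno
  -- a neighbour t of s
  obtain ⟨t, hts, htm⟩ : ∃ t, t ≠ s ∧ 1 ≤ m s t := by
    by_contra h
    push_neg at h
    have h0 : cutv m {s} = 0 := by
      rw [cutv_singleton]
      apply Finset.sum_eq_zero
      intro y hy
      have hy' : y ≠ s := by simpa using hy
      have := h y hy'
      omega
    omega
  -- blockers for sensible pairs
  have hblock : ∀ u v, u ≠ s → v ≠ s → 1 ≤ m s u → 1 ≤ m s v → (u = v → 2 ≤ m s u) →
      ∃ X, s ∉ X ∧ (∃ b, b ∉ X ∧ b ≠ s) ∧ u ∈ X ∧ v ∈ X ∧ cutv m X ≤ B + 1 := by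
    intro u v h1 h2 h3 h4 h5
    obtain ⟨X, hX1, hX2, hX3, hX4, hX5⟩ := hno u v h1 h2 h3 h4 h5
    exact ⟨X, hX1, hX2, hX3, hX4, by omega⟩
  -- every neighbour lies in a maximal dangerous set (containing t)
  have cover : ∀ u, u ≠ s → 1 ≤ m s u →
      ∃ M, Dang m B s t M ∧ u ∈ M ∧ (∀ Z, Dang m B s t Z → M ⊆ Z → Z = M) := by
    intro u hu hmu
    have hD : ∃ D, Dang m B s t D ∧ u ∈ D := by
      by_cases hut : u = t
      · subst hut
        by_cases h2 : 2 ≤ m s u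
        · obtain ⟨X, h1, h2', h3, h4, h5⟩ := hblock u u hu hu hmu hmu (fun _ => h2)
          exact ⟨X, ⟨h1, h3, h2', h5⟩, h3⟩
        · obtain ⟨u', hu's, hu'm, hu'u⟩ : ∃ u', u' ≠ s ∧ 1 ≤ m s u' ∧ u' ≠ u := by
            by_contra hc
            push_neg at hc
            have h0 : cutv m {s} ≤ m s u := by
              rw [cutv_singleton]
              have hsup : ∀ y ∈ ({s} : Finset V)ᶜ, m s y ≠ 0 → y ∈ ({u} : Finset V) := by
                intro y hy hym
                have hy' : y ≠ s := by simpa using hy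
                simp [hc y hy' (by omega)]
              calc ∑ y ∈ ({s} : Finset V)ᶜ, m s y ≤ ∑ y ∈ ({u} : Finset V), m s y :=
                    Finset.sum_le_sum_of_ne_zero hsup
              _ = m s u := by simp
            omega
          obtain ⟨X, h1, h2', h3, h4, h5⟩ := hblock u u' hu hu's hmu hu'm
            (fun he => absurd he.symm hu'u)
          exact ⟨X, ⟨h1, h3, h2', h5⟩, h3⟩
      · obtain ⟨X, h1, h2', h3, h4, h5⟩ := hblock t u hts hu htm hmu
          (fun he => absurd he.symm hut)
        exact ⟨X, ⟨h1, h3, h2', h5⟩, h4⟩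
    obtain ⟨D, hDd, hDu⟩ := hD
    obtain ⟨M, hM, hDM, hmax⟩ := exists_maximal_superset hDd
    exact ⟨M, hM, hDM hDu, hmax⟩
  -- L1 : bound on edges from s into a dangerous set
  have L1 : ∀ X, Dang m B s t X → ein m {s} X ≤ j := by
    intro X hX
    obtain ⟨hs, htX, ⟨b, hb, hbs⟩, hXc⟩ := hX
    have h1 : cutv m X + cutv m {s} = cutv m (X ∪ {s}) + 2 * ein m {s} X :=
      cut_union_singleton hsym hs
    have h2 : B ≤ cutv m (X ∪ {s}) := by
      apply hcut
      · exact ⟨t, Finset.mem_union_left _ htX, hts⟩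
      · refine ⟨b, ?_, hbs⟩
        simp only [Finset.mem_union, Finset.mem_singleton]
        rintro (h | h)
        · exact hb h
        · exact hbs h
    omega
  -- L3 : two dangerous sets never cover all neighbours of s
  have L3 : ∀ X Y, Dang m B s t X → Dang m B s t Y →
      ∃ w, w ≠ s ∧ 1 ≤ m s w ∧ w ∉ X ∧ w ∉ Y := by
    intro X Y hX hY
    by_contra hc
    push_neg at hc
    have hsplit : ∑ y ∈ ({s} : Finset V)ᶜ, m s y
        ≤ (∑ y ∈ X, m s y) + ∑ y ∈ Y.erase t, m s y := by
      rw [← Finset.sum_inter_add_sum_sdiff (({s} : Finset V)ᶜ) X (fun y => m s y)]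
      have hle1 : ∑ y ∈ ({s} : Finset V)ᶜ ∩ X, m s y ≤ ∑ y ∈ X, m s y :=
        Finset.sum_le_sum_of_subset Finset.inter_subset_right
      have hle2 : ∑ y ∈ ({s} : Finset V)ᶜ \ X, m s y ≤ ∑ y ∈ Y.erase t, m s y := by
        apply Finset.sum_le_sum_of_ne_zero
        intro y hy hym
        simp only [Finset.mem_sdiff, Finset.mem_compl, Finset.mem_singleton] at hy
        obtain ⟨hy1, hy2⟩ := hy
        have hyY : y ∈ Y := hc y hy1 (by omega) hy2
        have hyt : y ≠ t := fun he => hy2 (he ▸ hX.2.1)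
        exact Finset.mem_erase.2 ⟨hyt, hyY⟩
      omega
    have e1 : ∑ y ∈ X, m s y = ein m {s} X := (ein_singleton_left m s X).symm
    have e2 : (∑ y ∈ Y.erase t, m s y) + m s t = ein m {s} Y := by
      rw [ein_singleton_left]
      exact Finset.sum_erase_add Y _ hY.2.1
    have hX' := L1 X hX
    have hY' := L1 Y hY
    rw [← cutv_singleton] at hsplit
    omega
  -- three distinct maximal dangerous sets
  obtain ⟨M1, hM1, _, hmax1⟩ := cover t hts htm
  obtain ⟨u2, hu2s, hu2m, hu2M1, _⟩ := L3 M1 M1 hM1 hM1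
  obtain ⟨M2, hM2, hu2M2, hmax2⟩ := cover u2 hu2s hu2m
  obtain ⟨u3, hu3s, hu3m, hu3M1, hu3M2⟩ := L3 M1 M2 hM1 hM2
  obtain ⟨M3, hM3, hu3M3, hmax3⟩ := cover u3 hu3s hu3m
  have hne12 : M1 ≠ M2 := fun h => hu2M1 (h ▸ hu2M2)
  have hne13 : M1 ≠ M3 := fun h => hu3M1 (h ▸ hu3M3)
  have hne23 : M2 ≠ M3 := fun h => hu3M2 (h ▸ hu3M3)
  -- facts about pairs of distinct maximal dangerous sets
  have pairs : ∀ Mi Mj, Dang m B s t Mi → Dang m B s t Mj →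
      (∀ Z, Dang m B s t Z → Mi ⊆ Z → Z = Mi) → (∀ Z, Dang m B s t Z → Mj ⊆ Z → Z = Mj) →
      Mi ≠ Mj →
      ∃ w, w ≠ s ∧ w ∉ Mi ∧ w ∉ Mj ∧ cutv m (Mi ∩ Mj) = B ∧
        ein m (Mi ∩ Mj) ((Mi ∪ Mj)ᶜ) = 1 := by
    intro Mi Mj hMi hMj hmaxi hmaxj hneij
    obtain ⟨w, hws, hwm, hwMi, hwMj⟩ := L3 Mi Mj hMi hMj
    have hnsub1 : ¬ Mi ⊆ Mj := fun hss => hneij (hmaxi Mj hMj hss).symm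
    have hnsub2 : ¬ Mj ⊆ Mi := fun hss => hneij (hmaxj Mi hMi hss)
    obtain ⟨ai, haiMi, haiMj⟩ := Finset.not_subset.1 hnsub1
    obtain ⟨aj, hajMj, hajMi⟩ := Finset.not_subset.1 hnsub2
    have hUcut : B + 2 ≤ cutv m (Mi ∪ Mj) := by
      by_contra hcl
      push_neg at hcl
      have hud : Dang m B s t (Mi ∪ Mj) := by
        refine ⟨?_, Finset.mem_union_left _ hMi.2.1, ⟨w, ?_, hws⟩, by omega⟩
        · simp only [Finset.mem_union]
          rintro (h | h)
          · exact hMi.1 h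
          · exact hMj.1 h
        · simp only [Finset.mem_union]
          rintro (h | h)
          · exact hwMi h
          · exact hwMj h
      have heq := hmaxi (Mi ∪ Mj) hud Finset.subset_union_left
      exact hnsub2 (heq ▸ Finset.subset_union_right)
    have hIlow : B ≤ cutv m (Mi ∩ Mj) := by
      apply hcut
      · exact ⟨t, Finset.mem_inter.2 ⟨hMi.2.1, hMj.2.1⟩, hts⟩
      · exact ⟨w, fun hw => hwMi (Finset.mem_inter.1 hw).1, hws⟩
    have hs1 := sub1 m Mi Mj
    have hci : cutv m Mi ≤ B + 1 := hMi.2.2.2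
    have hcj : cutv m Mj ≤ B + 1 := hMj.2.2.2
    have hIcut : cutv m (Mi ∩ Mj) = B := by omega
    have hdi : B ≤ cutv m (Mi \ Mj) := by
      apply hcut
      · exact ⟨ai, Finset.mem_sdiff.2 ⟨haiMi, haiMj⟩, fun he => hMi.1 (he ▸ haiMi)⟩
      · exact ⟨t, fun ht' => (Finset.mem_sdiff.1 ht').2 hMj.2.1, hts⟩
    have hdj : B ≤ cutv m (Mj \ Mi) := by
      apply hcut
      · exact ⟨aj, Finset.mem_sdiff.2 ⟨hajMj, hajMi⟩, fun he => hMj.1 (he ▸ hajMj)⟩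
      · exact ⟨t, fun ht' => (Finset.mem_sdiff.1 ht').2 hMi.2.1, hts⟩
    have hs2 := sub2 hsym Mi Mj
    have hElow : 1 ≤ ein m (Mi ∩ Mj) ((Mi ∪ Mj)ᶜ) := by
      have hmem1 : t ∈ Mi ∩ Mj := Finset.mem_inter.2 ⟨hMi.2.1, hMj.2.1⟩
      have hmem2 : s ∈ (Mi ∪ Mj)ᶜ := by
        simp only [Finset.mem_compl, Finset.mem_union]
        rintro (h | h)
        · exact hMi.1 h
        · exact hMj.1 h
      have := single_le_ein (m := m) hmem1 hmem2
      have hts2 : 1 ≤ m t s := by rw [hsym t s]; exact htm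
      omega
    have hE : ein m (Mi ∩ Mj) ((Mi ∪ Mj)ᶜ) = 1 := by omega
    exact ⟨w, hws, hwMi, hwMj, hIcut, hE⟩
  -- triple-intersection containment
  have tri : ∀ Mi Mj Ml, Dang m B s t Mi → Dang m B s t Mj → Dang m B s t Ml →
      (∀ Z, Dang m B s t Z → Mi ⊆ Z → Z = Mi) → (∀ Z, Dang m B s t Z → Mj ⊆ Z → Z = Mj) →
      (∀ Z, Dang m B s t Z → Ml ⊆ Z → Z = Ml) → Mi ≠ Mj → Mi ≠ Ml →
      Mi ∩ Mj ⊆ Ml := by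
    intro Mi Mj Ml hMi hMj hMl hmaxi hmaxj hmaxl hneij hneil
    obtain ⟨wij, _, _, _, hAcut, _⟩ := pairs Mi Mj hMi hMj hmaxi hmaxj hneij
    obtain ⟨wil, hwils, hwilMi, hwilMl, _, _⟩ := pairs Mi Ml hMi hMl hmaxi hmaxl hneil
    have hs1 := sub1 m (Mi ∩ Mj) Ml
    have hIl : B ≤ cutv m ((Mi ∩ Mj) ∩ Ml) := by
      apply hcut
      · exact ⟨t, by
          simp only [Finset.mem_inter]
          exact ⟨⟨hMi.2.1, hMj.2.1⟩, hMl.2.1⟩, hts⟩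
      · refine ⟨wil, fun hw => ?_, hwils⟩
        simp only [Finset.mem_inter] at hw
        exact hwilMi hw.1.1
    have hcl : cutv m Ml ≤ B + 1 := hMl.2.2.2
    have hUup : cutv m ((Mi ∩ Mj) ∪ Ml) ≤ B + 1 := by omega
    have hud : Dang m B s t ((Mi ∩ Mj) ∪ Ml) := by
      refine ⟨?_, Finset.mem_union_right _ hMl.2.1, ⟨wil, ?_, hwils⟩, hUup⟩
      · simp only [Finset.mem_union, Finset.mem_inter]
        rintro (⟨h, _⟩ | h)
        · exact hMi.1 h
        · exact hMl.1 h
      · simp only [Finset.mem_union, Finset.mem_inter]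
        rintro (⟨h, _⟩ | h)
        · exact hwilMi h
        · exact hwilMl h
    have heq := hmaxl _ hud Finset.subset_union_right
    exact fun x hx => heq ▸ Finset.mem_union_left _ hx
  have hA3 : M1 ∩ M2 ⊆ M3 := tri M1 M2 M3 hM1 hM2 hM3 hmax1 hmax2 hmax3 hne12 hne13
  have hA2 : M1 ∩ M3 ⊆ M2 := tri M1 M3 M2 hM1 hM3 hM2 hmax1 hmax3 hmax2 hne13 hne12
  have hA1 : M2 ∩ M3 ⊆ M1 := tri M2 M3 M1 hM2 hM3 hM1 hmax2 hmax3 hmax1 hne23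
    (fun h => hne12 h.symm)
  obtain ⟨w12, hw12s, hw12M1, hw12M2, hAcut, hE12⟩ := pairs M1 M2 hM1 hM2 hmax1 hmax2 hne12
  obtain ⟨_, _, _, _, _, hE13⟩ := pairs M1 M3 hM1 hM3 hmax1 hmax3 hne13
  obtain ⟨_, _, _, _, _, hE23⟩ := pairs M2 M3 hM2 hM3 hmax2 hmax3 hne23
  have hts2 : 1 ≤ m t s := by rw [hsym t s]; exact htm
  -- every edge leaving M1 ∩ M2 goes to s
  have hzero : ∀ a ∈ M1 ∩ M2, ∀ b, b ∉ M1 ∩ M2 → b ≠ s → m a b = 0 := by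
    intro a ha b hb hbs
    have haM1 : a ∈ M1 := (Finset.mem_inter.1 ha).1
    have haM2 : a ∈ M2 := (Finset.mem_inter.1 ha).2
    have haM3 : a ∈ M3 := hA3 ha
    have key : ∀ Mi Mj : Finset V, Dang m B s t Mi → Dang m B s t Mj →
        a ∈ Mi → a ∈ Mj → b ∉ Mi → b ∉ Mj →
        ein m (Mi ∩ Mj) ((Mi ∪ Mj)ᶜ) = 1 → m a b = 0 := by
      intro Mi Mj hMi hMj haMi haMj hbMi hbMj hE
      have hmem1 : t ∈ Mi ∩ Mj := Finset.mem_inter.2 ⟨hMi.2.1, hMj.2.1⟩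
      have hmem2 : s ∈ (Mi ∪ Mj)ᶜ := by
        simp only [Finset.mem_compl, Finset.mem_union]
        rintro (h | h)
        · exact hMi.1 h
        · exact hMj.1 h
      have hmem3 : a ∈ Mi ∩ Mj := Finset.mem_inter.2 ⟨haMi, haMj⟩
      have hmem4 : b ∈ (Mi ∪ Mj)ᶜ := by
        simp only [Finset.mem_compl, Finset.mem_union]
        rintro (h | h)
        · exact hbMi h
        · exact hbMj h
      have hne : ((t, s) : V × V) ≠ (a, b) := by
        intro hpe
        rw [Prod.mk.injEq] at hpe
        exact hbs hpe.2.symm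
      have := pair_le_ein (m := m) hmem1 hmem2 hmem3 hmem4 hne
      omega
    by_cases hbM1 : b ∈ M1
    · have hbM2 : b ∉ M2 := fun h => hb (Finset.mem_inter.2 ⟨hbM1, h⟩)
      have hbM3 : b ∉ M3 := fun h => hbM2 (hA2 (Finset.mem_inter.2 ⟨hbM1, h⟩))
      exact key M2 M3 hM2 hM3 haM2 haM3 hbM2 hbM3 hE23
    · by_cases hbM3 : b ∈ M3
      · have hbM2 : b ∉ M2 := fun h => hbM1 (hA1 (Finset.mem_inter.2 ⟨h, hbM3⟩))
        exact key M1 M2 hM1 hM2 haM1 haM2 hbM1 hbM2 hE12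
      · exact key M1 M3 hM1 hM3 haM1 haM3 hbM1 hbM3 hE13
  -- hence the cut of M1 ∩ M2 is at most 1, contradiction with = B ≥ 2
  have hsA : s ∉ M1 ∩ M2 := fun h => hM1.1 (Finset.mem_inter.1 h).1
  have hcompl : ((M1 ∩ M2)ᶜ : Finset V) = {s} ∪ ((M1 ∩ M2)ᶜ \ {s}) := by
    ext z
    simp only [Finset.mem_union, Finset.mem_sdiff, Finset.mem_compl, Finset.mem_singleton]
    constructor
    · intro hz
      by_cases hzs : z = s
      · exact Or.inl hzs
      · exact Or.inr ⟨hz, hzs⟩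
    · rintro (rfl | ⟨hz, _⟩)
      · exact hsA
      · exact hz
  have hdisj : Disjoint ({s} : Finset V) (((M1 ∩ M2)ᶜ : Finset V) \ {s}) := by
    simp [Finset.disjoint_left]
  have hdecomp : cutv m (M1 ∩ M2)
      = ein m (M1 ∩ M2) {s} + ein m (M1 ∩ M2) (((M1 ∩ M2)ᶜ : Finset V) \ {s}) := by
    unfold cutv
    conv_lhs => rw [hcompl]
    exact ein_union_right hdisj
  have h2nd : ein m (M1 ∩ M2) (((M1 ∩ M2)ᶜ : Finset V) \ {s}) = 0 := by
    unfold ein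
    apply Finset.sum_eq_zero
    intro a ha
    apply Finset.sum_eq_zero
    intro b hb
    simp only [Finset.mem_sdiff, Finset.mem_compl, Finset.mem_singleton] at hb
    exact hzero a ha b hb.1 hb.2
  have h1st : ein m (M1 ∩ M2) {s} ≤ 1 := by
    have hsub : ({s} : Finset V) ⊆ (M1 ∪ M2)ᶜ := by
      intro z hz
      simp only [Finset.mem_singleton] at hz
      subst hz
      simp only [Finset.mem_compl, Finset.mem_union]
      rintro (h | h)
      · exact hM1.1 h
      · exact hM2.1 h
    calc ein m (M1 ∩ M2) {s} ≤ ein m (M1 ∩ M2) ((M1 ∪ M2)ᶜ) :=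
          ein_mono (Finset.Subset.refl _) hsub
    _ = 1 := hE12
  omega

/-- removal of one copy of edge `uv`. -/
def mSub (m : V → V → ℕ) (u v : V) : V → V → ℕ :=
  fun x y => m x y - (dInd u v x y + dInd v u x y)

lemma mSub_sym {m : V → V → ℕ} (hsym : ∀ x y, m x y = m y x) (u v : V) :
    ∀ x y, mSub m u v x y = mSub m u v y x := by
  intro x y
  unfold mSub dInd
  rw [hsym x y]
  have e1 : (x = u ∧ y = v) ↔ (y = v ∧ x = u) := and_comm
  have e2 : (x = v ∧ y = u) ↔ (y = u ∧ x = v) := and_comm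
  rw [if_congr e1 rfl rfl, if_congr e2 rfl rfl, Nat.add_comm]

lemma mSub_pt {m : V → V → ℕ} {u v : V} (hsym : ∀ x y, m x y = m y x)
    (huv : u ≠ v) (hm : 1 ≤ m u v) :
    ∀ x y, mSub m u v x y + (dInd u v x y + dInd v u x y) = m x y := by
  intro x y
  unfold mSub dInd
  by_cases h1 : x = u ∧ y = v
  · have h2 : ¬ (x = v ∧ y = u) := by
      intro h
      apply huv
      rw [← h1.1, h.1]
    have hm' : 1 ≤ m x y := by rw [h1.1, h1.2]; exact hm
    rw [if_pos h1, if_neg h2]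
    omega
  · by_cases h2 : x = v ∧ y = u
    · have hm' : 1 ≤ m x y := by rw [h2.1, h2.2, hsym v u]; exact hm
      rw [if_neg h1, if_pos h2]
      omega
    · rw [if_neg h1, if_neg h2]
      omega

lemma cut_mSub {m : V → V → ℕ} {u v : V} (hsym : ∀ x y, m x y = m y x)
    (huv : u ≠ v) (hm : 1 ≤ m u v) (X : Finset V) :
    cutv (mSub m u v) X
      + ((if u ∈ X ∧ v ∉ X then 1 else 0) + if v ∈ X ∧ u ∉ X then 1 else 0)
      = cutv m X := by
  have h1 : cutv (mSub m u v) X + (cutv (dInd u v) X + cutv (dInd v u) X)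
      = cutv m X := by
    rw [← cutv_add, ← cutv_add]
    exact cutv_congr_ne (fun x y _ => mSub_pt hsym huv hm x y) X
  rw [cutv_dInd, cutv_dInd] at h1
  exact h1

lemma exists_mindeg {m : V → V → ℕ} (hsym : ∀ x y, m x y = m y x) {B : ℕ} (hB : 2 ≤ B)
    (hn : 3 ≤ Fintype.card V)
    (hcut : ∀ X : Finset V, X.Nonempty → X ≠ Finset.univ → B ≤ cutv m X)
    (hmin : ∀ u v : V, u ≠ v → 1 ≤ m u v →
      ∃ X : Finset V, X.Nonempty ∧ X ≠ Finset.univ ∧ cutv (mSub m u v) X < B) :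
    ∃ s : V, cutv m {s} = B := by
  classical
  have hsngl : ∀ x : V, ({x} : Finset V).Nonempty ∧ ({x} : Finset V) ≠ Finset.univ := by
    intro x
    refine ⟨⟨x, Finset.mem_singleton_self x⟩, fun h => ?_⟩
    have hc : (Finset.univ : Finset V).card = Fintype.card V := Finset.card_univ
    rw [← h] at hc
    simp at hc
    omega
  have htight_of_edge : ∀ u v, u ≠ v → 1 ≤ m u v →
      ∃ Y : Finset V, (Y.Nonempty ∧ Y ≠ Finset.univ ∧ cutv m Y = B) ∧
        ((u ∈ Y ∧ v ∉ Y) ∨ (v ∈ Y ∧ u ∉ Y)) := by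
    intro u v huv hm
    obtain ⟨X, hXne, hXu, hXc⟩ := hmin u v huv hm
    have hid := cut_mSub hsym huv hm X
    have hlow := hcut X hXne hXu
    by_cases h1 : u ∈ X ∧ v ∉ X
    · have h2 : ¬ (v ∈ X ∧ u ∉ X) := fun h => h.2 h1.1
      rw [if_pos h1, if_neg h2] at hid
      exact ⟨X, ⟨hXne, hXu, by omega⟩, Or.inl h1⟩
    · by_cases h2 : v ∈ X ∧ u ∉ X
      · rw [if_neg h1, if_pos h2] at hid
        exact ⟨X, ⟨hXne, hXu, by omega⟩, Or.inr h2⟩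
      · rw [if_neg h1, if_neg h2] at hid
        omega
  have hedge : ∃ u v : V, u ≠ v ∧ 1 ≤ m u v := by
    have hpos : 0 < Fintype.card V := by omega
    obtain ⟨v0⟩ : Nonempty V := Fintype.card_pos_iff.1 hpos
    have h1 := hcut {v0} (hsngl v0).1 (hsngl v0).2
    rw [cutv_singleton] at h1
    by_contra hc
    push_neg at hc
    have h0 : ∑ y ∈ ({v0} : Finset V)ᶜ, m v0 y = 0 := by
      apply Finset.sum_eq_zero
      intro y hy
      have hy' : y ≠ v0 := by simpa using hy
      have := hc v0 y (fun he => hy' he.symm)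
      omega
    omega
  obtain ⟨u0, w0, hne0, hm0⟩ := hedge
  obtain ⟨Y0, hY0t, _⟩ := htight_of_edge u0 w0 hne0 hm0
  have hSne : (Finset.univ.powerset.filter
      fun X => X.Nonempty ∧ X ≠ Finset.univ ∧ cutv m X = B).Nonempty :=
    ⟨Y0, by simp only [Finset.mem_filter, Finset.mem_powerset]
            exact ⟨Finset.subset_univ _, hY0t⟩⟩
  obtain ⟨X0, hX0mem, hX0min⟩ := Finset.exists_min_image _ Finset.card hSne
  simp only [Finset.mem_filter, Finset.mem_powerset] at hX0mem
  obtain ⟨-, hX0ne, hX0u, hX0c⟩ := hX0mem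
  by_cases hcard : X0.card = 1
  · obtain ⟨s, hs⟩ := Finset.card_eq_one.1 hcard
    exact ⟨s, hs ▸ hX0c⟩
  exfalso
  have hcard2 : 2 ≤ X0.card := by
    have := Finset.card_pos.2 hX0ne
    omega
  have hinside : ∃ u v, u ∈ X0 ∧ v ∈ X0 ∧ u ≠ v ∧ 1 ≤ m u v := by
    by_contra hc
    push_neg at hc
    have hterm : ∀ x ∈ X0, B ≤ ∑ y ∈ X0ᶜ, m x y := by
      intro x hx
      have h1 := hcut {x} (hsngl x).1 (hsngl x).2
      rw [cutv_singleton] at h1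
      have h2 : ∑ y ∈ ({x} : Finset V)ᶜ, m x y ≤ ∑ y ∈ X0ᶜ, m x y := by
        apply Finset.sum_le_sum_of_ne_zero
        intro y hy hym
        simp only [Finset.mem_compl, Finset.mem_singleton] at hy ⊢
        intro hyX0
        have := hc x y hx hyX0 (fun he => hy (he ▸ rfl))
        omega
      omega
    have hsum : B * X0.card ≤ cutv m X0 := by
      have : cutv m X0 = ∑ x ∈ X0, ∑ y ∈ X0ᶜ, m x y := rfl
      rw [this]
      calc B * X0.card = ∑ _x ∈ X0, B := by rw [Finset.sum_const, Nat.mul_comm]; rfl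
      _ ≤ _ := Finset.sum_le_sum hterm
    have h2B : B * 2 ≤ B * X0.card := Nat.mul_le_mul_left B hcard2
    omega
  obtain ⟨u, v, huX, hvX, huv, hm1⟩ := hinside
  obtain ⟨Y, ⟨hYne, hYu, hYc⟩, hcross⟩ := htight_of_edge u v huv hm1
  have main : ∀ a b : V, a ∈ X0 → b ∈ X0 → a ∈ Y → b ∉ Y → False := by
    intro a b haX hbX haY hbY
    by_cases hUuniv : X0 ∪ Y = Finset.univ
    · have hs2 := sub2 hsym X0 Y
      have hd1 : B ≤ cutv m (X0 \ Y) := by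
        apply hcut
        · exact ⟨b, Finset.mem_sdiff.2 ⟨hbX, hbY⟩⟩
        · intro h
          exact hX0u (Finset.univ_subset_iff.1 (h ▸ Finset.sdiff_subset))
      have hd2 : B ≤ cutv m (Y \ X0) := by
        apply hcut
        · obtain ⟨w, hw⟩ : ∃ w, w ∉ X0 := by
            by_contra hcw
            push_neg at hcw
            exact hX0u (Finset.eq_univ_iff_forall.2 hcw)
          have hwY : w ∈ Y := by
            have : w ∈ X0 ∪ Y := hUuniv ▸ Finset.mem_univ w
            rcases Finset.mem_union.1 this with h | h
            · exact absurd h hw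
            · exact h
          exact ⟨w, Finset.mem_sdiff.2 ⟨hwY, hw⟩⟩
        · intro h
          have : a ∈ Y \ X0 := h ▸ Finset.mem_univ a
          exact (Finset.mem_sdiff.1 this).2 haX
      have htY : cutv m (X0 \ Y) = B := by omega
      have hss : X0 \ Y ⊂ X0 := by
        refine ⟨Finset.sdiff_subset, fun h => ?_⟩
        have : a ∈ X0 \ Y := h haX
        exact (Finset.mem_sdiff.1 this).2 haY
      have hsmall := Finset.card_lt_card hss
      have hYmem : X0 \ Y ∈ Finset.univ.powerset.filter
          fun X => X.Nonempty ∧ X ≠ Finset.univ ∧ cutv m X = B := by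
        simp only [Finset.mem_filter, Finset.mem_powerset]
        refine ⟨Finset.subset_univ _, ⟨b, Finset.mem_sdiff.2 ⟨hbX, hbY⟩⟩, ?_, htY⟩
        intro h
        exact hX0u (Finset.univ_subset_iff.1 (h ▸ Finset.sdiff_subset))
      have := hX0min _ hYmem
      omega
    · have hs1 := sub1 m X0 Y
      have hd1 : B ≤ cutv m (X0 ∩ Y) := by
        apply hcut
        · exact ⟨a, Finset.mem_inter.2 ⟨haX, haY⟩⟩
        · intro h
          have : b ∈ X0 ∩ Y := h ▸ Finset.mem_univ b
          exact hbY (Finset.mem_inter.1 this).2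
      have hd2 : B ≤ cutv m (X0 ∪ Y) := by
        apply hcut
        · exact ⟨a, Finset.mem_union_left _ haX⟩
        · exact hUuniv
      have htI : cutv m (X0 ∩ Y) = B := by omega
      have hss : X0 ∩ Y ⊂ X0 := by
        refine ⟨Finset.inter_subset_left, fun h => ?_⟩
        have : b ∈ X0 ∩ Y := h hbX
        exact hbY (Finset.mem_inter.1 this).2
      have hsmall := Finset.card_lt_card hss
      have hImem : X0 ∩ Y ∈ Finset.univ.powerset.filter
          fun X => X.Nonempty ∧ X ≠ Finset.univ ∧ cutv m X = B := by
        simp only [Finset.mem_filter, Finset.mem_powerset]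
        refine ⟨Finset.subset_univ _, ⟨a, Finset.mem_inter.2 ⟨haX, haY⟩⟩, ?_, htI⟩
        intro h
        have : b ∈ X0 ∩ Y := h ▸ Finset.mem_univ b
        exact hbY (Finset.mem_inter.1 this).2
      have := hX0min _ hImem
      omega
  rcases hcross with ⟨h1, h2⟩ | ⟨h1, h2⟩
  · exact main u v huX hvX h1 h2
  · exact main v u hvX huX h1 h2

lemma dInd_swap (a b x y : V) : dInd a b x y = dInd b a y x := by
  unfold dInd
  exact if_congr and_comm rfl rfl

/-- splitting off the pair of edges `su`, `sv` (replacing them by `uv`). -/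
def mSplit (m : V → V → ℕ) (s u v : V) : V → V → ℕ :=
  fun x y => (m x y + (dInd u v x y + dInd v u x y))
    - ((dInd s u x y + dInd u s x y) + (dInd s v x y + dInd v s x y))

lemma mSplit_sym {m : V → V → ℕ} (hsym : ∀ x y, m x y = m y x) (s u v : V) :
    ∀ x y, mSplit m s u v x y = mSplit m s u v y x := by
  intro x y
  unfold mSplit
  rw [hsym x y, dInd_swap u v x y, dInd_swap v u x y, dInd_swap s u x y, dInd_swap u s x y,
    dInd_swap s v x y, dInd_swap v s x y]
  omega

lemma mSplit_pt {m : V → V → ℕ} {s u v : V} (hsym : ∀ x y, m x y = m y x)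
    (hus : u ≠ s) (hvs : v ≠ s) (hmu : 1 ≤ m s u) (hmv : 1 ≤ m s v)
    (huv2 : u = v → 2 ≤ m s u) :
    ∀ x y, x ≠ y →
      mSplit m s u v x y + ((dInd s u x y + dInd u s x y) + (dInd s v x y + dInd v s x y))
        = m x y + (dInd u v x y + dInd v u x y) := by
  intro x y hxy
  unfold mSplit
  suffices h : (dInd s u x y + dInd u s x y) + (dInd s v x y + dInd v s x y)
      ≤ m x y + (dInd u v x y + dInd v u x y) by omega
  unfold dInd
  by_cases b1 : x = s ∧ y = u
  · have hb2 : ¬ (x = u ∧ y = s) := fun h => hxy (b1.1.trans h.2.symm)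
    have hb4 : ¬ (x = v ∧ y = s) := fun h => hxy (b1.1.trans h.2.symm)
    have hmxy : 1 ≤ m x y := by rw [b1.1, b1.2]; exact hmu
    by_cases b3 : x = s ∧ y = v
    · have huv : u = v := b1.2.symm.trans b3.2
      have hmxy2 : 2 ≤ m x y := by rw [b1.1, b1.2]; exact huv2 huv
      rw [if_pos b1, if_neg hb2, if_pos b3, if_neg hb4]
      omega
    · rw [if_pos b1, if_neg hb2, if_neg b3, if_neg hb4]
      omega
  · by_cases b2 : x = u ∧ y = s
    · have hb1 : ¬ (x = s ∧ y = u) := b1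
      have hb3 : ¬ (x = s ∧ y = v) := fun h => hxy (h.1.trans b2.2.symm)
      have hmxy : 1 ≤ m x y := by rw [b2.1, b2.2, hsym u s]; exact hmu
      by_cases b4 : x = v ∧ y = s
      · have huv : u = v := b2.1.symm.trans b4.1
        have hmxy2 : 2 ≤ m x y := by
          rw [b2.1, b2.2, hsym u s]
          exact huv2 huv
        rw [if_neg hb1, if_pos b2, if_neg hb3, if_pos b4]
        omega
      · rw [if_neg hb1, if_pos b2, if_neg hb3, if_neg b4]
        omega
    · by_cases b3 : x = s ∧ y = v
      · have hb4 : ¬ (x = v ∧ y = s) := fun h => hxy (b3.1.trans h.2.symm)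
        have hmxy : 1 ≤ m x y := by rw [b3.1, b3.2]; exact hmv
        rw [if_neg b1, if_neg b2, if_pos b3, if_neg hb4]
        omega
      · by_cases b4 : x = v ∧ y = s
        · have hmxy : 1 ≤ m x y := by rw [b4.1, b4.2, hsym v s]; exact hmv
          rw [if_neg b1, if_neg b2, if_neg b3, if_pos b4]
          omega
        · rw [if_neg b1, if_neg b2, if_neg b3, if_neg b4]
          omega

lemma cut_mSplit {m : V → V → ℕ} {s u v : V} (hsym : ∀ x y, m x y = m y x)
    (hus : u ≠ s) (hvs : v ≠ s) (hmu : 1 ≤ m s u) (hmv : 1 ≤ m s v)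
    (huv2 : u = v → 2 ≤ m s u) (X : Finset V) :
    cutv (mSplit m s u v) X
      + (((if s ∈ X ∧ u ∉ X then 1 else 0) + (if u ∈ X ∧ s ∉ X then 1 else 0))
        + ((if s ∈ X ∧ v ∉ X then 1 else 0) + (if v ∈ X ∧ s ∉ X then 1 else 0)))
      = cutv m X
      + ((if u ∈ X ∧ v ∉ X then 1 else 0) + (if v ∈ X ∧ u ∉ X then 1 else 0)) := by
  have h1 : cutv (fun x y => mSplit m s u v x y
        + ((dInd s u x y + dInd u s x y) + (dInd s v x y + dInd v s x y))) X
      = cutv (fun x y => m x y + (dInd u v x y + dInd v u x y)) X :=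
    cutv_congr_ne (fun x y hxy => mSplit_pt hsym hus hvs hmu hmv huv2 x y hxy) X
  have h2 : cutv (fun x y => mSplit m s u v x y
        + ((dInd s u x y + dInd u s x y) + (dInd s v x y + dInd v s x y))) X
      = cutv (mSplit m s u v) X
        + ((cutv (dInd s u) X + cutv (dInd u s) X)
          + (cutv (dInd s v) X + cutv (dInd v s) X)) := by
    rw [← cutv_add, ← cutv_add, ← cutv_add, ← cutv_add]
  have h3 : cutv (fun x y => m x y + (dInd u v x y + dInd v u x y)) X
      = cutv m X + (cutv (dInd u v) X + cutv (dInd v u) X) := by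
    rw [← cutv_add, ← cutv_add]
  rw [h2, h3] at h1
  rw [cutv_dInd, cutv_dInd, cutv_dInd, cutv_dInd, cutv_dInd, cutv_dInd] at h1
  exact h1

lemma din_add3 (f a b : V → V → ℕ) (X : Finset V) :
    din (fun x y => f x y + (a x y + b x y)) X = din f X + (din a X + din b X) := by
  have h1 : din (fun x y => f x y + (a x y + b x y)) X
      = din f X + din (fun x y => a x y + b x y) X := din_add f (fun x y => a x y + b x y) X
  have h2 : din (fun x y => a x y + b x y) X = din a X + din b X := din_add a b X
  rw [h1, h2]

lemma cutv_le_bsum (m : V → V → ℕ) (X : Finset V) : cutv m X ≤ bsum m := by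
  rw [cutv_eq_bsum]
  apply bsum_le
  intro x y
  by_cases h : x ∈ X ∧ y ∉ X <;> simp [h]

section SubtypeTransfer

variable (s : V)

lemma card_ne_subtype : Fintype.card {x : V // x ≠ s} = Fintype.card V - 1 := by
  classical
  have h1 : Fintype.card {x : V // x ≠ s}
      = (Finset.univ.filter (fun x : V => x ≠ s)).card := Fintype.card_subtype _
  rw [Finset.filter_ne'] at h1
  rw [Finset.card_erase_of_mem (Finset.mem_univ s), Finset.card_univ] at h1
  exact h1

lemma map_subtype_erase (X : Finset V) :
    (X.subtype (fun x => x ≠ s)).map (Function.Embedding.subtype _) = X.erase s := by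
  ext z
  simp only [Finset.mem_map, Finset.mem_subtype, Function.Embedding.coe_subtype,
    Finset.mem_erase]
  constructor
  · rintro ⟨a, ha, rfl⟩
    exact ⟨a.2, ha⟩
  · rintro ⟨hz, hzX⟩
    exact ⟨⟨z, hz⟩, hzX, rfl⟩

lemma compl_subtype (X : Finset V) :
    (X.subtype (fun x => x ≠ s))ᶜ = (Xᶜ).subtype (fun x => x ≠ s) := by
  ext a
  simp [Finset.mem_subtype]

lemma ein_subtype (m : V → V → ℕ) (A B : Finset {x : V // x ≠ s}) :
    ein (fun a b : {x : V // x ≠ s} => m a.1 b.1) A B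
      = ein m (A.map (Function.Embedding.subtype _)) (B.map (Function.Embedding.subtype _)) := by
  unfold ein
  rw [Finset.sum_map]
  apply Finset.sum_congr rfl
  intro a _
  rw [Finset.sum_map]
  rfl

lemma ein_erase_right (o : V → V → ℕ) (A B : Finset V) (h : ∀ a ∈ A, o a s = 0) :
    ein o A (B.erase s) = ein o A B := by
  unfold ein
  apply Finset.sum_congr rfl
  intro a ha
  exact Finset.sum_erase B (h a ha)

lemma ein_erase_left (o : V → V → ℕ) (A B : Finset V) (h : ∀ b, o s b = 0) :
    ein o (A.erase s) B = ein o A B := by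
  unfold ein
  exact Finset.sum_erase A (by simp [h])

end SubtypeTransfer

theorem multi_main : ∀ (n : ℕ) (V : Type u) [Fintype V] [DecidableEq V] (K : ℕ),
    Fintype.card V ≤ n → 1 ≤ K →
    ∀ m : V → V → ℕ, (∀ x y, m x y = m y x) →
    (∀ X : Finset V, X.Nonempty → X ≠ Finset.univ → 2 * K ≤ cutv m X) →
    ∃ o : V → V → ℕ, (∀ x y, x ≠ y → o x y + o y x = m x y) ∧
      ∀ X : Finset V, X.Nonempty → X ≠ Finset.univ → K ≤ din o X := by
  intro n
  induction n with
  | zero =>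
    intro V _ _ K hcard hK m hsym hcut
    refine ⟨fun _ _ => 0, fun x y hxy => ?_, fun X hXne hXu => ?_⟩
    · exact absurd hcard (by
        have : 0 < Fintype.card V := Fintype.card_pos_iff.2 ⟨x⟩
        omega)
    · obtain ⟨a, _⟩ := hXne
      exact absurd hcard (by
        have : 0 < Fintype.card V := Fintype.card_pos_iff.2 ⟨a⟩
        omega)
  | succ n IH =>
    intro V instF instD K hcard hK m hsym hcut
    by_cases hsmall : Fintype.card V ≤ 1
    · refine ⟨fun _ _ => 0,
        fun x y hxy => absurd (Fintype.card_le_one_iff.1 hsmall x y) hxy,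
        fun X hXne hXu => ?_⟩
      exfalso
      obtain ⟨a, haX⟩ := hXne
      obtain ⟨b, hbX⟩ : ∃ b, b ∉ X := by
        by_contra hcb
        push_neg at hcb
        exact hXu (Finset.eq_univ_iff_forall.2 hcb)
      exact hbX ((Fintype.card_le_one_iff.1 hsmall b a) ▸ haX)
    by_cases htwo : Fintype.card V = 2
    · obtain ⟨a, b, hab⟩ : ∃ a b : V, a ≠ b :=
        Fintype.exists_pair_of_one_lt_card (by omega)
      have hall : ∀ z : V, z = a ∨ z = b := by
        intro z
        by_contra hz
        push_neg at hz
        have h3 : 3 ≤ Fintype.card V := by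
          have hcard3 : ({z, a, b} : Finset V).card = 3 := by
            rw [Finset.card_insert_of_notMem (by simp [hz.1, hz.2]),
              Finset.card_insert_of_notMem (by simp [hab]), Finset.card_singleton]
          have hle := Finset.card_le_univ ({z, a, b} : Finset V)
          omega
        omega
      have hauniv : ({a} : Finset V) ≠ Finset.univ := by
        intro h
        have hb : b ∈ ({a} : Finset V) := by rw [h]; exact Finset.mem_univ b
        exact hab (Finset.mem_singleton.1 hb).symm
      have hbuniv : ({b} : Finset V) ≠ Finset.univ := by
        intro h
        have ha : a ∈ ({b} : Finset V) := by rw [h]; exact Finset.mem_univ a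
        exact hab (Finset.mem_singleton.1 ha)
      have hcompa : ({a} : Finset V)ᶜ = {b} := by
        ext z
        simp only [Finset.mem_compl, Finset.mem_singleton]
        constructor
        · intro hz
          rcases hall z with h | h
          · exact absurd h hz
          · exact h
        · intro h hza
          exact hab (hza.symm.trans h)
      have hcompb : ({b} : Finset V)ᶜ = {a} := by
        ext z
        simp only [Finset.mem_compl, Finset.mem_singleton]
        constructor
        · intro hz
          rcases hall z with h | h
          · exact h
          · exact absurd h hz
        · intro h hzb
          exact hab (h.symm.trans hzb)
      have hma : cutv m {a} = m a b := by
        show ein m {a} ({a} : Finset V)ᶜ = m a b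
        rw [hcompa]
        simp [ein]
      have h2K : 2 * K ≤ m a b := by
        rw [← hma]
        exact hcut {a} ⟨a, Finset.mem_singleton_self a⟩ hauniv
      refine ⟨fun x y => if x = a ∧ y = b then K
        else if x = b ∧ y = a then m a b - K else 0, ?_, ?_⟩
      · intro x y hxy
        show (if x = a ∧ y = b then K else if x = b ∧ y = a then m a b - K else 0)
          + (if y = a ∧ x = b then K else if y = b ∧ x = a then m a b - K else 0) = m x y
        rcases hall x with hx | hx <;> rcases hall y with hy | hy
        · exact absurd (hx.trans hy.symm) hxy
        · rw [if_pos ⟨hx, hy⟩, if_neg (fun h : y = a ∧ x = b => hab (h.1.symm.trans hy)),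
            if_pos ⟨hy, hx⟩, hx, hy]
          omega
        · rw [if_neg (fun h : x = a ∧ y = b => hab (h.1.symm.trans hx)), if_pos ⟨hx, hy⟩,
            if_pos ⟨hy, hx⟩, hx, hy, hsym b a]
          omega
        · exact absurd (hx.trans hy.symm) hxy
      · intro X hXne hXu
        have hboth : ¬ (a ∈ X ∧ b ∈ X) := by
          rintro ⟨h1, h2⟩
          apply hXu
          apply Finset.eq_univ_iff_forall.2
          intro z
          rcases hall z with rfl | rfl
          · exact h1
          · exact h2
        obtain ⟨c, hc⟩ := hXne
        have hXeq : X = {a} ∨ X = {b} := by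
          rcases hall c with hca | hcb
          · left
            ext z
            simp only [Finset.mem_singleton]
            constructor
            · intro hz
              rcases hall z with h | h
              · exact h
              · exact absurd ⟨hca ▸ hc, h ▸ hz⟩ hboth
            · intro h
              exact h ▸ (hca ▸ hc)
          · right
            ext z
            simp only [Finset.mem_singleton]
            constructor
            · intro hz
              rcases hall z with h | h
              · exact absurd ⟨h ▸ hz, hcb ▸ hc⟩ hboth
              · exact h
            · intro h
              exact h ▸ (hcb ▸ hc)
        rcases hXeq with rfl | rfl
        · show K ≤ ein (fun x y => if x = a ∧ y = b then K
            else if x = b ∧ y = a then m a b - K else 0) ({a} : Finset V)ᶜ {a}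
          rw [hcompa]
          have he : ein (fun x y => if x = a ∧ y = b then K
              else if x = b ∧ y = a then m a b - K else 0) {b} {a} = m a b - K := by
            simp [ein, Ne.symm hab]
          rw [he]
          omega
        · show K ≤ ein (fun x y => if x = a ∧ y = b then K
            else if x = b ∧ y = a then m a b - K else 0) ({b} : Finset V)ᶜ {b}
          rw [hcompb]
          have he : ein (fun x y => if x = a ∧ y = b then K
              else if x = b ∧ y = a then m a b - K else 0) {a} {b} = K := by
            simp [ein]
          rw [he]
    have hn3 : 3 ≤ Fintype.card V := by omega
    -- complete splitting at a node s of degree 2K, with lifting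
    have split : ∀ (s : V) (j : ℕ) (m : V → V → ℕ), (∀ x y, m x y = m y x) →
        (∀ X : Finset V, (∃ a, a ∈ X ∧ a ≠ s) → (∃ b, b ∉ X ∧ b ≠ s) → 2 * K ≤ cutv m X) →
        cutv m {s} = 2 * j →
        ∃ o : V → V → ℕ, (∀ x y, x ≠ y → o x y + o y x = m x y) ∧
          (∀ X : Finset V, (∃ a, a ∈ X ∧ a ≠ s) → (∃ b, b ∉ X ∧ b ≠ s) → K ≤ din o X) ∧
          din o {s} = j ∧ din o ({s} : Finset V)ᶜ = j := by
      intro s j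
      induction j with
      | zero =>
        intro m hsym' hcut' hds
        have hiso : ∀ y, y ≠ s → m s y = 0 := by
          intro y hy
          have h0 : ∑ z ∈ ({s} : Finset V)ᶜ, m s z = 0 := by
            rw [← cutv_singleton]
            omega
          exact Finset.sum_eq_zero_iff.1 h0 y (Finset.mem_compl.2 (by simpa using hy))
        have hiso2 : ∀ y, y ≠ s → m y s = 0 := fun y hy => (hsym' y s).trans (hiso y hy)
        have hcardV' : Fintype.card {x : V // x ≠ s} ≤ n := by
          rw [card_ne_subtype]
          omega
        have hsym2 : ∀ a b : {x : V // x ≠ s},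
            (fun a b : {x : V // x ≠ s} => m a.1 b.1) a b
              = (fun a b : {x : V // x ≠ s} => m a.1 b.1) b a :=
          fun a b => hsym' a.1 b.1
        have hcut2 : ∀ X' : Finset {x : V // x ≠ s}, X'.Nonempty → X' ≠ Finset.univ →
            2 * K ≤ cutv (fun a b : {x : V // x ≠ s} => m a.1 b.1) X' := by
          intro X' hne hnu
          have hsX : s ∉ X'.map (Function.Embedding.subtype _) := by
            intro hmem
            rw [Finset.mem_map] at hmem
            obtain ⟨c, _, hcv⟩ := hmem
            exact c.2 hcv
          have hXa : ∃ a, a ∈ X'.map (Function.Embedding.subtype _) ∧ a ≠ s := by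
            obtain ⟨a, ha⟩ := hne
            exact ⟨a.1, Finset.mem_map_of_mem _ ha, a.2⟩
          have hXb : ∃ b, b ∉ X'.map (Function.Embedding.subtype _) ∧ b ≠ s := by
            obtain ⟨b, hb⟩ : ∃ b, b ∉ X' := by
              by_contra hcb
              push_neg at hcb
              exact hnu (Finset.eq_univ_iff_forall.2 hcb)
            refine ⟨b.1, ?_, b.2⟩
            intro hmem
            rw [Finset.mem_map] at hmem
            obtain ⟨c, hc, hcv⟩ := hmem
            have hcb : c = b := Subtype.ext (by simpa using hcv)
            exact hb (hcb ▸ hc)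
          have hcutX := hcut' (X'.map (Function.Embedding.subtype _)) hXa hXb
          have hX'eq : X' = (X'.map (Function.Embedding.subtype _)).subtype
              (fun x => x ≠ s) := by
            ext a
            simp only [Finset.mem_subtype, Finset.mem_map,
              Function.Embedding.coe_subtype]
            constructor
            · intro ha
              exact ⟨a, ha, rfl⟩
            · rintro ⟨c, hc, hcv⟩
              have : c = a := Subtype.ext hcv
              exact this ▸ hc
          have hcmap : (X'ᶜ).map (Function.Embedding.subtype _)
              = ((X'.map (Function.Embedding.subtype _))ᶜ).erase s := by
            conv_lhs => rw [hX'eq]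
            rw [compl_subtype, map_subtype_erase]
          have htrans : cutv (fun a b : {x : V // x ≠ s} => m a.1 b.1) X'
              = cutv m (X'.map (Function.Embedding.subtype _)) := by
            unfold cutv
            calc ein (fun a b : {x : V // x ≠ s} => m a.1 b.1) X' X'ᶜ
                = ein m (X'.map (Function.Embedding.subtype _))
                    ((X'ᶜ).map (Function.Embedding.subtype _)) := ein_subtype s m X' X'ᶜ
              _ = ein m (X'.map (Function.Embedding.subtype _))
                    (((X'.map (Function.Embedding.subtype _))ᶜ).erase s) := by
                  rw [hcmap]
              _ = ein m (X'.map (Function.Embedding.subtype _))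
                    ((X'.map (Function.Embedding.subtype _))ᶜ) := by
                  apply ein_erase_right
                  intro a ha
                  exact hiso2 a (fun he => hsX (he ▸ ha))
          rw [htrans]
          exact hcutX
        obtain ⟨o', ho'1, ho'2⟩ := IH {x : V // x ≠ s} K hcardV' hK
          (fun a b => m a.1 b.1) hsym2 hcut2
        set o : V → V → ℕ :=
          fun x y => if h : x ≠ s ∧ y ≠ s then o' ⟨x, h.1⟩ ⟨y, h.2⟩ else 0 with hodef
        have hozr : ∀ x, o x s = 0 := fun x => dif_neg (fun h => h.2 rfl)
        have hozl : ∀ y, o s y = 0 := fun y => dif_neg (fun h => h.1 rfl)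
        have hoval : ∀ (x y : V) (hx : x ≠ s) (hy : y ≠ s),
            o x y = o' ⟨x, hx⟩ ⟨y, hy⟩ := fun x y hx hy => dif_pos ⟨hx, hy⟩
        have ho'o : ∀ a b : {x : V // x ≠ s}, o' a b = o a.1 b.1 :=
          fun a b => (hoval a.1 b.1 a.2 b.2).symm
        have horient : ∀ x y, x ≠ y → o x y + o y x = m x y := by
          intro x y hxy
          by_cases hx : x = s
          · have hy : y ≠ s := fun h => hxy (hx.trans h.symm)
            rw [hx, hozl y, hozr y]
            exact (hiso y hy).symm
          · by_cases hy : y = s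
            · rw [hy, hozr x, hozl x]
              exact (hiso2 x hx).symm
            · rw [hoval x y hx hy, hoval y x hy hx]
              exact ho'1 ⟨x, hx⟩ ⟨y, hy⟩ (fun h => hxy (congrArg Subtype.val h))
        have hdin_trans : ∀ X : Finset V,
            din o X = din o' (X.subtype (fun x => x ≠ s)) := by
          intro X
          unfold din
          calc ein o Xᶜ X
              = ein o (Xᶜ.erase s) X := (ein_erase_left s o Xᶜ X hozl).symm
            _ = ein o (Xᶜ.erase s) (X.erase s) :=
                (ein_erase_right s o _ X (fun a _ => hozr a)).symm
            _ = ein o ((Xᶜ.subtype (fun x => x ≠ s)).map (Function.Embedding.subtype _))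
                  ((X.subtype (fun x => x ≠ s)).map (Function.Embedding.subtype _)) := by
                rw [map_subtype_erase, map_subtype_erase]
            _ = ein (fun a b : {x : V // x ≠ s} => o a.1 b.1)
                  (Xᶜ.subtype (fun x => x ≠ s)) (X.subtype (fun x => x ≠ s)) :=
                (ein_subtype s o _ _).symm
            _ = ein o' (Xᶜ.subtype (fun x => x ≠ s)) (X.subtype (fun x => x ≠ s)) := by
                unfold ein
                refine Finset.sum_congr rfl fun a _ => Finset.sum_congr rfl fun b _ => ?_
                exact (ho'o a b).symm
            _ = ein o' (X.subtype (fun x => x ≠ s))ᶜ (X.subtype (fun x => x ≠ s)) := by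
                rw [compl_subtype]
        refine ⟨o, horient, ?_, ?_, ?_⟩
        · intro X hA hB
          rw [hdin_trans]
          apply ho'2
          · obtain ⟨a, haX, has⟩ := hA
            exact ⟨⟨a, has⟩, Finset.mem_subtype.2 haX⟩
          · obtain ⟨b, hbX, hbs⟩ := hB
            intro hu
            have hmem : (⟨b, hbs⟩ : {x : V // x ≠ s}) ∈ X.subtype (fun x => x ≠ s) :=
              hu ▸ Finset.mem_univ _
            exact hbX (Finset.mem_subtype.1 hmem)
        · apply Finset.sum_eq_zero
          intro x _
          apply Finset.sum_eq_zero
          intro y hy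
          rw [Finset.mem_singleton.1 hy]
          exact hozr x
        · show ein o ({s} : Finset V)ᶜᶜ ({s} : Finset V)ᶜ = 0
          rw [compl_compl]
          apply Finset.sum_eq_zero
          intro x hx
          have hxs : x = s := Finset.mem_singleton.1 hx
          rw [hxs]
          apply Finset.sum_eq_zero
          intro y _
          exact hozl y
      | succ j IHj =>
        intro m hsym' hcut' hds
        obtain ⟨u, v, hus, hvs, hmu, hmv, huv2, hadm⟩ :=
          lovasz hsym' (by omega : 2 ≤ 2 * K) s hcut' (by omega : 1 ≤ j + 1) hds
        have hm₁sym := mSplit_sym hsym' s u v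
        have hcut₁ : ∀ X : Finset V, (∃ a, a ∈ X ∧ a ≠ s) → (∃ b, b ∉ X ∧ b ≠ s) →
            2 * K ≤ cutv (mSplit m s u v) X := by
          intro X hA hB
          have hid := cut_mSplit hsym' hus hvs hmu hmv huv2 X
          have hbase := hcut' X hA hB
          by_cases hsX : s ∈ X
          · by_cases huX : u ∈ X
            · by_cases hvX : v ∈ X
              · simp [hsX, huX, hvX] at hid
                omega
              · simp [hsX, huX, hvX] at hid
                omega
            · by_cases hvX : v ∈ X
              · simp [hsX, huX, hvX] at hid
                omega
              · simp [hsX, huX, hvX] at hid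
                have h1 : cutv m Xᶜ = cutv m X := cutv_compl hsym' X
                obtain ⟨a, haX, has⟩ := hA
                have h2 := hadm Xᶜ (by simp [hsX]) ⟨a, by simp [haX], has⟩
                  (by simp [huX]) (by simp [hvX])
                omega
          · by_cases huX : u ∈ X
            · by_cases hvX : v ∈ X
              · simp [hsX, huX, hvX] at hid
                have h2 := hadm X hsX hB huX hvX
                omega
              · simp [hsX, huX, hvX] at hid
                omega
            · by_cases hvX : v ∈ X
              · simp [hsX, huX, hvX] at hid
                omega
              · simp [hsX, huX, hvX] at hid
                omega
        have hds₁ : cutv (mSplit m s u v) {s} = 2 * j := by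
          have hid := cut_mSplit hsym' hus hvs hmu hmv huv2 ({s} : Finset V)
          have h1 : s ∈ ({s} : Finset V) := Finset.mem_singleton_self s
          have h2 : u ∉ ({s} : Finset V) := by simp [hus]
          have h3 : v ∉ ({s} : Finset V) := by simp [hvs]
          simp [h1, h2, h3] at hid
          omega
        obtain ⟨o₁, ho₁orient, ho₁din, ho₁s, ho₁sc⟩ :=
          IHj (mSplit m s u v) hm₁sym hcut₁ hds₁
        by_cases huv : u = v
        · subst huv
          refine ⟨fun x y => o₁ x y + (dInd u s x y + dInd s u x y), ?_, ?_, ?_, ?_⟩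
          · intro x y hxy
            have h1 := ho₁orient x y hxy
            have h2 := mSplit_pt hsym' hus hvs hmu hmv huv2 x y hxy
            have h3 : dInd u u x y = 0 := by
              unfold dInd
              rw [if_neg]
              exact fun h => hxy (h.1.trans h.2.symm)
            have e1 : dInd u s y x = dInd s u x y := (dInd_swap s u x y).symm
            have e2 : dInd s u y x = dInd u s x y := (dInd_swap u s x y).symm
            show (o₁ x y + (dInd u s x y + dInd s u x y))
              + (o₁ y x + (dInd u s y x + dInd s u y x)) = m x y
            rw [e1, e2]
            omega
          · intro X hA hB
            have h := ho₁din X hA hB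
            have hd : din (fun x y => o₁ x y + (dInd u s x y + dInd s u x y)) X
                = din o₁ X + (din (dInd u s) X + din (dInd s u) X) :=
              din_add3 o₁ (dInd u s) (dInd s u) X
            omega
          · have hd : din (fun x y => o₁ x y + (dInd u s x y + dInd s u x y)) {s}
                = din o₁ {s} + (din (dInd u s) {s} + din (dInd s u) {s}) :=
              din_add3 o₁ (dInd u s) (dInd s u) {s}
            have e1 : din (dInd u s) ({s} : Finset V) = 1 := by
              rw [din_dInd, if_pos ⟨by simp [hus], Finset.mem_singleton_self s⟩]
            have e2 : din (dInd s u) ({s} : Finset V) = 0 := by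
              rw [din_dInd, if_neg]
              exact fun h => h.1 (Finset.mem_singleton_self s)
            omega
          · have hd : din (fun x y => o₁ x y + (dInd u s x y + dInd s u x y)) ({s} : Finset V)ᶜ
                = din o₁ ({s} : Finset V)ᶜ
                  + (din (dInd u s) ({s} : Finset V)ᶜ + din (dInd s u) ({s} : Finset V)ᶜ) :=
              din_add3 o₁ (dInd u s) (dInd s u) _
            have e1 : din (dInd u s) (({s} : Finset V)ᶜ) = 0 := by
              rw [din_dInd, if_neg]
              exact fun h => (Finset.mem_compl.1 h.2) (Finset.mem_singleton_self s)
            have e2 : din (dInd s u) (({s} : Finset V)ᶜ) = 1 := by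
              rw [din_dInd, if_pos]
              exact ⟨fun hc => (Finset.mem_compl.1 hc) (Finset.mem_singleton_self s),
                Finset.mem_compl.2 (by simp [hus])⟩
            omega
        · have hsum_uv : o₁ u v + o₁ v u = mSplit m s u v u v := ho₁orient u v huv
          have hval_uv : mSplit m s u v u v = m u v + 1 := by
            have h2 := mSplit_pt hsym' hus hvs hmu hmv huv2 u v huv
            unfold dInd at h2
            simp [hus, hvs, huv, fun h : v = u => huv h.symm] at h2
            omega
          by_cases hdir : 1 ≤ o₁ u v
          · have hl : ∀ x y, (if x = u ∧ y = v then o₁ x y - 1 else o₁ x y)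
                + dInd u v x y = o₁ x y := by
              intro x y
              unfold dInd
              by_cases h : x = u ∧ y = v
              · have hx : 1 ≤ o₁ x y := by rw [h.1, h.2]; exact hdir
                rw [if_pos h, if_pos h]
                omega
              · rw [if_neg h, if_neg h]
                omega
            refine ⟨fun x y => (if x = u ∧ y = v then o₁ x y - 1 else o₁ x y)
              + (dInd u s x y + dInd s v x y), ?_, ?_, ?_, ?_⟩
            · intro x y hxy
              have h1 := ho₁orient x y hxy
              have h2 := mSplit_pt hsym' hus hvs hmu hmv huv2 x y hxy
              have hl1 := hl x y
              have hl2 := hl y x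
              have e1 : dInd u s y x = dInd s u x y := (dInd_swap s u x y).symm
              have e2 : dInd s v y x = dInd v s x y := (dInd_swap v s x y).symm
              have e3 : dInd u v y x = dInd v u x y := (dInd_swap v u x y).symm
              show ((if x = u ∧ y = v then o₁ x y - 1 else o₁ x y)
                  + (dInd u s x y + dInd s v x y))
                + ((if y = u ∧ x = v then o₁ y x - 1 else o₁ y x)
                  + (dInd u s y x + dInd s v y x)) = m x y
              rw [e1, e2]
              rw [e3] at hl2
              omega
            · intro X hA hB
              have h := ho₁din X hA hB
              have hd : din (fun x y => (if x = u ∧ y = v then o₁ x y - 1 else o₁ x y)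
                    + (dInd u s x y + dInd s v x y)) X
                  = din (fun x y => if x = u ∧ y = v then o₁ x y - 1 else o₁ x y) X
                    + (din (dInd u s) X + din (dInd s v) X) :=
                din_add3 _ _ _ X
              have hd2 : din (fun x y => (if x = u ∧ y = v then o₁ x y - 1 else o₁ x y)
                    + dInd u v x y) X = din o₁ X :=
                din_congr_ne (fun x y _ => hl x y) X
              have hd3 : din (fun x y => (if x = u ∧ y = v then o₁ x y - 1 else o₁ x y)
                    + dInd u v x y) X
                  = din (fun x y => if x = u ∧ y = v then o₁ x y - 1 else o₁ x y) X
                    + din (dInd u v) X := din_add _ _ X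
              have d1 : din (dInd u v) X = if u ∉ X ∧ v ∈ X then 1 else 0 := din_dInd u v X
              have d2 : din (dInd u s) X = if u ∉ X ∧ s ∈ X then 1 else 0 := din_dInd u s X
              have d3 : din (dInd s v) X = if s ∉ X ∧ v ∈ X then 1 else 0 := din_dInd s v X
              by_cases h1 : u ∉ X ∧ v ∈ X
              · by_cases hsX : s ∈ X
                · rw [if_pos h1] at d1
                  rw [if_pos ⟨h1.1, hsX⟩] at d2
                  omega
                · rw [if_pos h1] at d1
                  rw [if_pos ⟨hsX, h1.2⟩] at d3
                  omega
              · rw [if_neg h1] at d1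
                omega
            · have hd : din (fun x y => (if x = u ∧ y = v then o₁ x y - 1 else o₁ x y)
                    + (dInd u s x y + dInd s v x y)) ({s} : Finset V)
                  = din (fun x y => if x = u ∧ y = v then o₁ x y - 1 else o₁ x y) {s}
                    + (din (dInd u s) ({s} : Finset V) + din (dInd s v) ({s} : Finset V)) :=
                din_add3 _ _ _ _
              have hd2 : din (fun x y => (if x = u ∧ y = v then o₁ x y - 1 else o₁ x y)
                    + dInd u v x y) ({s} : Finset V) = din o₁ {s} :=
                din_congr_ne (fun x y _ => hl x y) _
              have hd3 : din (fun x y => (if x = u ∧ y = v then o₁ x y - 1 else o₁ x y)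
                    + dInd u v x y) ({s} : Finset V)
                  = din (fun x y => if x = u ∧ y = v then o₁ x y - 1 else o₁ x y) {s}
                    + din (dInd u v) ({s} : Finset V) := din_add _ _ _
              have d1 : din (dInd u v) ({s} : Finset V) = 0 := by
                rw [din_dInd, if_neg]
                exact fun h => hvs (Finset.mem_singleton.1 h.2)
              have d2 : din (dInd u s) ({s} : Finset V) = 1 := by
                rw [din_dInd, if_pos ⟨by simp [hus], Finset.mem_singleton_self s⟩]
              have d3 : din (dInd s v) ({s} : Finset V) = 0 := by
                rw [din_dInd, if_neg]
                exact fun h => h.1 (Finset.mem_singleton_self s)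
              omega
            · have hd : din (fun x y => (if x = u ∧ y = v then o₁ x y - 1 else o₁ x y)
                    + (dInd u s x y + dInd s v x y)) (({s} : Finset V)ᶜ)
                  = din (fun x y => if x = u ∧ y = v then o₁ x y - 1 else o₁ x y) (({s} : Finset V)ᶜ)
                    + (din (dInd u s) (({s} : Finset V)ᶜ) + din (dInd s v) (({s} : Finset V)ᶜ)) :=
                din_add3 _ _ _ _
              have hd2 : din (fun x y => (if x = u ∧ y = v then o₁ x y - 1 else o₁ x y)
                    + dInd u v x y) (({s} : Finset V)ᶜ) = din o₁ (({s} : Finset V)ᶜ) :=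
                din_congr_ne (fun x y _ => hl x y) _
              have hd3 : din (fun x y => (if x = u ∧ y = v then o₁ x y - 1 else o₁ x y)
                    + dInd u v x y) (({s} : Finset V)ᶜ)
                  = din (fun x y => if x = u ∧ y = v then o₁ x y - 1 else o₁ x y) (({s} : Finset V)ᶜ)
                    + din (dInd u v) (({s} : Finset V)ᶜ) := din_add _ _ _
              have d1 : din (dInd u v) (({s} : Finset V)ᶜ) = 0 := by
                rw [din_dInd, if_neg]
                exact fun h => h.1 (Finset.mem_compl.2 (by simp [hus]))
              have d2 : din (dInd u s) (({s} : Finset V)ᶜ) = 0 := by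
                rw [din_dInd, if_neg]
                exact fun h => (Finset.mem_compl.1 h.2) (Finset.mem_singleton_self s)
              have d3 : din (dInd s v) (({s} : Finset V)ᶜ) = 1 := by
                rw [din_dInd, if_pos]
                exact ⟨fun hc => (Finset.mem_compl.1 hc) (Finset.mem_singleton_self s),
                  Finset.mem_compl.2 (by simp [hvs])⟩
              omega
          · have hdir2 : 1 ≤ o₁ v u := by omega
            have hl : ∀ x y, (if x = v ∧ y = u then o₁ x y - 1 else o₁ x y)
                + dInd v u x y = o₁ x y := by
              intro x y
              unfold dInd
              by_cases h : x = v ∧ y = u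
              · have hx : 1 ≤ o₁ x y := by rw [h.1, h.2]; exact hdir2
                rw [if_pos h, if_pos h]
                omega
              · rw [if_neg h, if_neg h]
                omega
            refine ⟨fun x y => (if x = v ∧ y = u then o₁ x y - 1 else o₁ x y)
              + (dInd v s x y + dInd s u x y), ?_, ?_, ?_, ?_⟩
            · intro x y hxy
              have h1 := ho₁orient x y hxy
              have h2 := mSplit_pt hsym' hus hvs hmu hmv huv2 x y hxy
              have hl1 := hl x y
              have hl2 := hl y x
              have e1 : dInd v s y x = dInd s v x y := (dInd_swap s v x y).symm
              have e2 : dInd s u y x = dInd u s x y := (dInd_swap u s x y).symm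
              have e3 : dInd v u y x = dInd u v x y := (dInd_swap u v x y).symm
              show ((if x = v ∧ y = u then o₁ x y - 1 else o₁ x y)
                  + (dInd v s x y + dInd s u x y))
                + ((if y = v ∧ x = u then o₁ y x - 1 else o₁ y x)
                  + (dInd v s y x + dInd s u y x)) = m x y
              rw [e1, e2]
              rw [e3] at hl2
              omega
            · intro X hA hB
              have h := ho₁din X hA hB
              have hd : din (fun x y => (if x = v ∧ y = u then o₁ x y - 1 else o₁ x y)
                    + (dInd v s x y + dInd s u x y)) X
                  = din (fun x y => if x = v ∧ y = u then o₁ x y - 1 else o₁ x y) X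
                    + (din (dInd v s) X + din (dInd s u) X) :=
                din_add3 _ _ _ X
              have hd2 : din (fun x y => (if x = v ∧ y = u then o₁ x y - 1 else o₁ x y)
                    + dInd v u x y) X = din o₁ X :=
                din_congr_ne (fun x y _ => hl x y) X
              have hd3 : din (fun x y => (if x = v ∧ y = u then o₁ x y - 1 else o₁ x y)
                    + dInd v u x y) X
                  = din (fun x y => if x = v ∧ y = u then o₁ x y - 1 else o₁ x y) X
                    + din (dInd v u) X := din_add _ _ X
              have d1 : din (dInd v u) X = if v ∉ X ∧ u ∈ X then 1 else 0 := din_dInd v u X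
              have d2 : din (dInd v s) X = if v ∉ X ∧ s ∈ X then 1 else 0 := din_dInd v s X
              have d3 : din (dInd s u) X = if s ∉ X ∧ u ∈ X then 1 else 0 := din_dInd s u X
              by_cases h1 : v ∉ X ∧ u ∈ X
              · by_cases hsX : s ∈ X
                · rw [if_pos h1] at d1
                  rw [if_pos ⟨h1.1, hsX⟩] at d2
                  omega
                · rw [if_pos h1] at d1
                  rw [if_pos ⟨hsX, h1.2⟩] at d3
                  omega
              · rw [if_neg h1] at d1
                omega
            · have hd : din (fun x y => (if x = v ∧ y = u then o₁ x y - 1 else o₁ x y)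
                    + (dInd v s x y + dInd s u x y)) ({s} : Finset V)
                  = din (fun x y => if x = v ∧ y = u then o₁ x y - 1 else o₁ x y) {s}
                    + (din (dInd v s) ({s} : Finset V) + din (dInd s u) ({s} : Finset V)) :=
                din_add3 _ _ _ _
              have hd2 : din (fun x y => (if x = v ∧ y = u then o₁ x y - 1 else o₁ x y)
                    + dInd v u x y) ({s} : Finset V) = din o₁ {s} :=
                din_congr_ne (fun x y _ => hl x y) _
              have hd3 : din (fun x y => (if x = v ∧ y = u then o₁ x y - 1 else o₁ x y)
                    + dInd v u x y) ({s} : Finset V)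
                  = din (fun x y => if x = v ∧ y = u then o₁ x y - 1 else o₁ x y) {s}
                    + din (dInd v u) ({s} : Finset V) := din_add _ _ _
              have d1 : din (dInd v u) ({s} : Finset V) = 0 := by
                rw [din_dInd, if_neg]
                exact fun h => hus (Finset.mem_singleton.1 h.2)
              have d2 : din (dInd v s) ({s} : Finset V) = 1 := by
                rw [din_dInd, if_pos ⟨by simp [hvs], Finset.mem_singleton_self s⟩]
              have d3 : din (dInd s u) ({s} : Finset V) = 0 := by
                rw [din_dInd, if_neg]
                exact fun h => h.1 (Finset.mem_singleton_self s)
              omega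
            · have hd : din (fun x y => (if x = v ∧ y = u then o₁ x y - 1 else o₁ x y)
                    + (dInd v s x y + dInd s u x y)) (({s} : Finset V)ᶜ)
                  = din (fun x y => if x = v ∧ y = u then o₁ x y - 1 else o₁ x y) (({s} : Finset V)ᶜ)
                    + (din (dInd v s) (({s} : Finset V)ᶜ) + din (dInd s u) (({s} : Finset V)ᶜ)) :=
                din_add3 _ _ _ _
              have hd2 : din (fun x y => (if x = v ∧ y = u then o₁ x y - 1 else o₁ x y)
                    + dInd v u x y) (({s} : Finset V)ᶜ) = din o₁ (({s} : Finset V)ᶜ) :=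
                din_congr_ne (fun x y _ => hl x y) _
              have hd3 : din (fun x y => (if x = v ∧ y = u then o₁ x y - 1 else o₁ x y)
                    + dInd v u x y) (({s} : Finset V)ᶜ)
                  = din (fun x y => if x = v ∧ y = u then o₁ x y - 1 else o₁ x y) (({s} : Finset V)ᶜ)
                    + din (dInd v u) (({s} : Finset V)ᶜ) := din_add _ _ _
              have d1 : din (dInd v u) (({s} : Finset V)ᶜ) = 0 := by
                rw [din_dInd, if_neg]
                exact fun h => h.1 (Finset.mem_compl.2 (by simp [hvs]))
              have d2 : din (dInd v s) (({s} : Finset V)ᶜ) = 0 := by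
                rw [din_dInd, if_neg]
                exact fun h => (Finset.mem_compl.1 h.2) (Finset.mem_singleton_self s)
              have d3 : din (dInd s u) (({s} : Finset V)ᶜ) = 1 := by
                rw [din_dInd, if_pos]
                exact ⟨fun hc => (Finset.mem_compl.1 hc) (Finset.mem_singleton_self s),
                  Finset.mem_compl.2 (by simp [hus])⟩
              omega
    -- induction on the number of edges
    have inner : ∀ (T : ℕ) (m : V → V → ℕ), bsum m ≤ T → (∀ x y, m x y = m y x) →
        (∀ X : Finset V, X.Nonempty → X ≠ Finset.univ → 2 * K ≤ cutv m X) →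
        ∃ o : V → V → ℕ, (∀ x y, x ≠ y → o x y + o y x = m x y) ∧
          ∀ X : Finset V, X.Nonempty → X ≠ Finset.univ → K ≤ din o X := by
      intro T
      induction T with
      | zero =>
        intro m hT hsym' hcut'
        exfalso
        obtain ⟨v⟩ : Nonempty V := Fintype.card_pos_iff.1 (by omega)
        have hval : ({v} : Finset V) ≠ Finset.univ := by
          intro h
          have hc : (Finset.univ : Finset V).card = Fintype.card V := Finset.card_univ
          rw [← h] at hc
          simp at hc
          omega
        have h1 := hcut' {v} ⟨v, Finset.mem_singleton_self v⟩ hval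
        have h2 := cutv_le_bsum m ({v} : Finset V)
        omega
      | succ T IHT =>
        intro m hT hsym' hcut'
        by_cases hrem : ∃ u v : V, u ≠ v ∧ 1 ≤ m u v ∧
            ∀ X : Finset V, X.Nonempty → X ≠ Finset.univ → 2 * K ≤ cutv (mSub m u v) X
        · obtain ⟨u, v, huv, hm1, hok⟩ := hrem
          have hbs : bsum (mSub m u v) + 2 = bsum m := by
            have h1 : bsum (fun x y => mSub m u v x y + (dInd u v x y + dInd v u x y))
                = bsum m := bsum_congr (fun x y => mSub_pt hsym' huv hm1 x y)
            have h2 : bsum (fun x y => mSub m u v x y + (dInd u v x y + dInd v u x y))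
                = bsum (mSub m u v) + (bsum (dInd u v) + bsum (dInd v u)) := by
              rw [← bsum_add, ← bsum_add]
            have h3 : bsum (dInd u v) = 1 := bsum_point u v 1
            have h4 : bsum (dInd v u) = 1 := bsum_point v u 1
            omega
          obtain ⟨o₂, ho₂orient, ho₂din⟩ :=
            IHT (mSub m u v) (by omega) (mSub_sym hsym' u v) hok
          refine ⟨fun x y => o₂ x y + dInd u v x y, ?_, ?_⟩
          · intro x y hxy
            have h1 := ho₂orient x y hxy
            have h2 := mSub_pt hsym' huv hm1 x y
            have h3 : dInd u v y x = dInd v u x y := (dInd_swap v u x y).symm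
            show (o₂ x y + dInd u v x y) + (o₂ y x + dInd u v y x) = m x y
            omega
          · intro X hXne hXu
            have h := ho₂din X hXne hXu
            have hd : din (fun x y => o₂ x y + dInd u v x y) X
                = din o₂ X + din (dInd u v) X := din_add o₂ (dInd u v) X
            omega
        · push_neg at hrem
          obtain ⟨s, hdeg⟩ := exists_mindeg hsym' (by omega : 2 ≤ 2 * K) hn3 hcut' hrem
          obtain ⟨o, ho1, ho2, ho3, ho4⟩ := split s K m hsym'
            (fun X hA hB => by
              obtain ⟨a, haX, _⟩ := hA
              obtain ⟨b, hb, _⟩ := hB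
              exact hcut' X ⟨a, haX⟩ (fun hu => hb (hu ▸ Finset.mem_univ b)))
            hdeg
          refine ⟨o, ho1, ?_⟩
          intro X hXne hXu
          by_cases hA : ∃ a, a ∈ X ∧ a ≠ s
          · by_cases hB : ∃ b, b ∉ X ∧ b ≠ s
            · exact ho2 X hA hB
            · push_neg at hB
              have hsX : s ∉ X := by
                intro hsX
                apply hXu
                apply Finset.eq_univ_iff_forall.2
                intro z
                by_contra hz
                exact hz (hB z hz ▸ hsX)
              have hXeq : X = ({s} : Finset V)ᶜ := by
                ext z
                simp only [Finset.mem_compl, Finset.mem_singleton]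
                constructor
                · intro hz hzs
                  exact hsX (hzs ▸ hz)
                · intro hz
                  by_contra hzX
                  exact hz (hB z hzX)
              rw [hXeq]
              omega
          · push_neg at hA
            obtain ⟨c, hc⟩ := hXne
            have hcs := hA c hc
            have hXeq : X = ({s} : Finset V) := by
              ext z
              simp only [Finset.mem_singleton]
              exact ⟨hA z, fun h => h ▸ (hcs ▸ hc)⟩
            rw [hXeq]
            omega
    exact inner (bsum m) m le_rfl hsym hcut

lemma natcard_pairs (P : V → V → Prop) [inst : ∀ x y, Decidable (P x y)] :
    Nat.card {p : V × V // P p.1 p.2} = ∑ x : V, ∑ y : V, if P x y then 1 else 0 := by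
  rw [Nat.card_eq_fintype_card, Fintype.card_subtype, Finset.card_filter,
    Fintype.sum_prod_type]


end NWaux


open NWaux in
/-- Nash-Williams for k = 2: a finite graph has a 2-arc-connected orientation
iff it is 4-edge-connected. -/
theorem stmt_1 {V : Type*} [Fintype V] (G : SimpleGraph V) :
    (∃ D : V → V → Prop, IsOrientation G D ∧ ArcConn D 2) ↔ EdgeConn G 4 := by
  classical
  constructor
  · rintro ⟨D, hor, hac⟩
    intro Xs hne hnu
    have hXc_ne : (Xsᶜ : Set V).Nonempty := Set.nonempty_compl.2 hnu
    have hXc_nu : (Xsᶜ : Set V) ≠ Set.univ := by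
      intro h
      obtain ⟨a, ha⟩ := hne
      exact (h ▸ Set.mem_univ a : a ∈ (Xsᶜ : Set V)) ha
    have hA := hac Xs hne hnu
    have hB := hac Xsᶜ hXc_ne hXc_nu
    let f : {p : V × V // D p.1 p.2 ∧ p.1 ∉ Xs ∧ p.2 ∈ Xs}
        ⊕ {p : V × V // D p.1 p.2 ∧ p.1 ∉ Xsᶜ ∧ p.2 ∈ Xsᶜ}
        → {p : V × V // p.1 ∈ Xs ∧ p.2 ∉ Xs ∧ G.Adj p.1 p.2} :=
      Sum.elim
        (fun a => ⟨(a.1.2, a.1.1), a.2.2.2, a.2.2.1, ((hor.1 a.1.1 a.1.2 a.2.1).symm)⟩)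
        (fun b => ⟨b.1, Set.notMem_compl_iff.1 b.2.2.1, b.2.2.2, hor.1 b.1.1 b.1.2 b.2.1⟩)
    have hinj : Function.Injective f := by
      rintro (⟨⟨x1, y1⟩, hD1, hx1, hy1⟩ | ⟨⟨x1, y1⟩, hD1, hx1, hy1⟩)
        (⟨⟨x2, y2⟩, hD2, hx2, hy2⟩ | ⟨⟨x2, y2⟩, hD2, hx2, hy2⟩) hfe
      · have he : ((y1, x1) : V × V) = (y2, x2) := congrArg Subtype.val hfe
        have h1 : y1 = y2 := (Prod.ext_iff.1 he).1
        have h2 : x1 = x2 := (Prod.ext_iff.1 he).2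
        subst h1; subst h2; rfl
      · exfalso
        have he : ((y1, x1) : V × V) = (x2, y2) := congrArg Subtype.val hfe
        have h1 : y1 = x2 := (Prod.ext_iff.1 he).1
        have h2 : x1 = y2 := (Prod.ext_iff.1 he).2
        subst h1; subst h2
        have hadj := hor.1 x1 y1 hD1
        exact ((hor.2 x1 y1 hadj).1 hD1) hD2
      · exfalso
        have he : ((x1, y1) : V × V) = (y2, x2) := congrArg Subtype.val hfe
        have h1 : x1 = y2 := (Prod.ext_iff.1 he).1
        have h2 : y1 = x2 := (Prod.ext_iff.1 he).2
        subst h1; subst h2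
        have hadj := hor.1 x1 y1 hD1
        exact ((hor.2 x1 y1 hadj).1 hD1) hD2
      · have he : ((x1, y1) : V × V) = (x2, y2) := congrArg Subtype.val hfe
        have h1 : x1 = x2 := (Prod.ext_iff.1 he).1
        have h2 : y1 = y2 := (Prod.ext_iff.1 he).2
        subst h1; subst h2; rfl
    have hcs : Nat.card ({p : V × V // D p.1 p.2 ∧ p.1 ∉ Xs ∧ p.2 ∈ Xs}
        ⊕ {p : V × V // D p.1 p.2 ∧ p.1 ∉ Xsᶜ ∧ p.2 ∈ Xsᶜ})
        = Nat.card {p : V × V // D p.1 p.2 ∧ p.1 ∉ Xs ∧ p.2 ∈ Xs}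
          + Nat.card {p : V × V // D p.1 p.2 ∧ p.1 ∉ Xsᶜ ∧ p.2 ∈ Xsᶜ} := Nat.card_sum
    have hle := Nat.card_le_card_of_injective f hinj
    omega
  · intro hEC
    set m : V → V → ℕ := fun x y => if G.Adj x y then 1 else 0 with hmdef
    have hsym : ∀ x y, m x y = m y x := by
      intro x y
      by_cases h : G.Adj x y
      · have h2 : G.Adj y x := h.symm
        simp [m, h, h2]
      · have h2 : ¬ G.Adj y x := fun h2 => h h2.symm
        simp [m, h, h2]
    have hcut : ∀ X : Finset V, X.Nonempty → X ≠ Finset.univ → 2 * 2 ≤ NWaux.cutv m X := by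
      intro X hXne hXnu
      have h1 := hEC (↑X : Set V) (by
          obtain ⟨a, ha⟩ := hXne
          exact ⟨a, by exact_mod_cast ha⟩)
        (by
          intro h
          apply hXnu
          apply Finset.coe_injective
          rw [h, Finset.coe_univ])
      rw [natcard_pairs (fun x y => x ∈ (↑X : Set V) ∧ y ∉ (↑X : Set V) ∧ G.Adj x y)] at h1
      have h2 : NWaux.cutv m X = ∑ x : V, ∑ y : V,
          if x ∈ (↑X : Set V) ∧ y ∉ (↑X : Set V) ∧ G.Adj x y then 1 else 0 := by
        rw [NWaux.cutv_eq_bsum]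
        unfold NWaux.bsum
        refine Finset.sum_congr rfl fun x _ => Finset.sum_congr rfl fun y _ => ?_
        by_cases hx : x ∈ X <;> by_cases hy : y ∈ X <;> by_cases ha : G.Adj x y <;>
          simp [m, hx, hy, ha]
      rw [h2]
      omega
    obtain ⟨o, horient, hdin⟩ :=
      NWaux.multi_main (Fintype.card V) V 2 le_rfl (by norm_num) m hsym hcut
    refine ⟨fun x y => x ≠ y ∧ o x y = 1, ⟨?_, ?_⟩, ?_⟩
    · rintro a b ⟨hab, h1⟩
      have hsum := horient a b hab
      by_contra hadj
      have hm : m a b = 0 := by simp [m, hadj]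
      omega
    · intro a b hadj
      have hab := G.ne_of_adj hadj
      have hsum : o a b + o b a = 1 := by
        have h := horient a b hab
        have hm : m a b = 1 := by simp [m, hadj]
        omega
      constructor
      · rintro ⟨_, h1⟩ ⟨_, h2⟩
        omega
      · intro hnd
        refine ⟨hab, ?_⟩
        by_contra h1
        exact hnd ⟨hab.symm, by omega⟩
    · intro Xs hne hnu
      have hXne : Xs.toFinset.Nonempty := by
        obtain ⟨a, ha⟩ := hne
        exact ⟨a, Set.mem_toFinset.2 ha⟩
      have hXnu : Xs.toFinset ≠ Finset.univ := by
        intro h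
        apply hnu
        apply Set.eq_univ_iff_forall.2
        intro z
        exact Set.mem_toFinset.1 (h ▸ Finset.mem_univ z)
      have h2 := hdin Xs.toFinset hXne hXnu
      rw [natcard_pairs (fun x y => (x ≠ y ∧ o x y = 1) ∧ x ∉ Xs ∧ y ∈ Xs)]
      have h3 : NWaux.din o Xs.toFinset = ∑ x : V, ∑ y : V,
          if (x ≠ y ∧ o x y = 1) ∧ x ∉ Xs ∧ y ∈ Xs then 1 else 0 := by
        rw [NWaux.din_eq_bsum]
        unfold NWaux.bsum
        refine Finset.sum_congr rfl fun x _ => Finset.sum_congr rfl fun y _ => ?_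
        show (if x ∉ Xs.toFinset ∧ y ∈ Xs.toFinset then o x y else 0)
          = if (x ≠ y ∧ o x y = 1) ∧ x ∉ Xs ∧ y ∈ Xs then 1 else 0
        by_cases hx : x ∉ Xs.toFinset ∧ y ∈ Xs.toFinset
        · have hxy : x ≠ y := fun h => hx.1 (h ▸ hx.2)
          have hxs : x ∉ Xs := fun h => hx.1 (Set.mem_toFinset.2 h)
          have hys : y ∈ Xs := Set.mem_toFinset.1 hx.2
          rw [if_pos hx]
          have hsum := horient x y hxy
          have hm1 : m x y ≤ 1 := by
            by_cases h : G.Adj x y <;> simp [m, h]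
          by_cases h1 : o x y = 1
          · rw [if_pos ⟨⟨hxy, h1⟩, hxs, hys⟩, h1]
          · have h0 : o x y = 0 := by omega
            rw [if_neg (fun hcon => h1 hcon.1.2), h0]
        · rw [if_neg hx,
            if_neg (fun hcon => hx ⟨fun hmem => hcon.2.1 (Set.mem_toFinset.1 hmem),
              Set.mem_toFinset.2 hcon.2.2⟩)]
      omega
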